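/- arXiv:1903.02462 — 2 statements merged into one kernel-verified Lean document; each statement's English description precedes it below -/
import Mathlib

section
/- Let G be a maximal outerplane graph on n ≥ 7 vertices with diagonal set D, and suppose the three diagonals {v_r, v_{r+2}}, {v_{r+2}, v_{r+5}}, {v_r, v_{r+5}} all belong to D (so v_r v_{r+2} v_{r+5} spans an internal triangle whose two sections have exactly one and exactly two internal vertices, respectively) and the vertices v_{r+1} and v_{r+4} both have degree 2 in G. Let G' be the graph obtained from G by contracting the four vertices v_{r+1}, v_{r+2}, v_{r+3}, v_{r+4} to a single new vertex x, deleting any resulting parallel edges. Then G' is a maximal outerplane graph on n − 3 vertices in which x has degree 2 and is adjacent to v_r and v_{r+5}, the number of essential pairs satisfies k(G') ≤ k(G) − 1, and γ(G) ≤ γ(G') + 1. -/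
open SimpleGraph

/-- `x` lies strictly inside the clockwise arc from `a` to `b` on the cycle `ℤ/nℤ`. -/
def InArc (n : ℕ) (a b x : ZMod n) : Prop :=
  0 < (x - a).val ∧ (x - a).val < (b - a).val

/-- `e` is a diagonal: an unordered pair of distinct, cyclically non-adjacent vertices. -/
def IsDiagonal (n : ℕ) (e : Sym2 (ZMod n)) : Prop :=
  ∃ a b : ZMod n, e = s(a, b) ∧ a ≠ b ∧ a + 1 ≠ b ∧ b + 1 ≠ a

/-- Two diagonals (with four pairwise distinct endpoints) cross: exactly one endpoint of the
second lies strictly inside the clockwise arc determined by the first. -/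
def Crosses (n : ℕ) (e f : Sym2 (ZMod n)) : Prop :=
  ∃ a b c d : ZMod n, e = s(a, b) ∧ f = s(c, d) ∧
    a ≠ c ∧ a ≠ d ∧ b ≠ c ∧ b ≠ d ∧ Xor' (InArc n a b c) (InArc n a b d)

/-- The graph on `ℤ/nℤ` consisting of the boundary cycle together with a diagonal set `D`. -/
def mog (n : ℕ) (D : Finset (Sym2 (ZMod n))) : SimpleGraph (ZMod n) :=
  SimpleGraph.fromEdgeSet ({e | ∃ i : ZMod n, e = s(i, i + 1)} ∪ (D : Set (Sym2 (ZMod n))))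

/-- `D` is a triangulating diagonal set of the convex `n`-gon: all members are diagonals,
they are pairwise non-crossing, and there are `n - 3` of them. -/
def IsTriangulation (n : ℕ) (D : Finset (Sym2 (ZMod n))) : Prop :=
  (∀ e ∈ D, IsDiagonal n e) ∧ (∀ e ∈ D, ∀ f ∈ D, ¬ Crosses n e f) ∧ D.card = n - 3

/-- `S` is a dominating set of `G`. -/
def IsDominating {V : Type*} (G : SimpleGraph V) (S : Set V) : Prop :=
  ∀ v, v ∈ S ∨ ∃ u ∈ S, G.Adj u v

/-- The domination number of `G`. -/
noncomputable def domNum {V : Type*} (G : SimpleGraph V) : ℕ :=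
  sInf {k | ∃ S : Set V, IsDominating G S ∧ S.ncard = k}

/-- `v` has degree `2` in `G`. -/
def Deg2 {V : Type*} (G : SimpleGraph V) (v : V) : Prop :=
  (G.neighborSet v).ncard = 2

/-- The ordered pair `(r, s)` is an essential pair of the graph `G` on `ℤ/nℤ`:
`r` and `s` are consecutive degree-2 vertices and the clockwise boundary path
`C[r,s]` has at least `3` edges. -/
def Essential (n : ℕ) (G : SimpleGraph (ZMod n)) (r s : ZMod n) : Prop :=
  Deg2 G r ∧ Deg2 G s ∧ (∀ x, InArc n r s x → ¬ Deg2 G x) ∧ 3 ≤ (s - r).val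

/-- The number of essential pairs of the graph `G` on `ℤ/nℤ`. -/
noncomputable def numEssential (n : ℕ) (G : SimpleGraph (ZMod n)) : ℕ :=
  {p : ZMod n × ZMod n | Essential n G p.1 p.2}.ncard

/-- The vertices of the section `G[r,s]`, i.e. of the clockwise boundary path `C[r,s]`. -/
def sectVerts (n : ℕ) (r s : ZMod n) : Set (ZMod n) :=
  {x | (x - r).val ≤ (s - r).val}

/-- The order-preserving embedding of `ℤ/mℤ` into `ℤ/nℤ` sending `0` to `a`,
`1` to `a + 1`, …, used to identify a reduced graph on `m` vertices with the induced
subgraph of a graph on `ℤ/nℤ` obtained by deleting an arc of `n - m` vertices. -/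
def arcEmb (n m : ℕ) (a : ZMod n) (i : ZMod m) : ZMod n := a + (i.val : ZMod n)

/-- The projection of `ℤ/nℤ` onto `ℤ/mℤ` contracting the `c + 1` vertices
`a, a + 1, …, a + c` to the single vertex `0` and relabelling the remaining
vertices consecutively. -/
def arcProj (n m : ℕ) (a : ZMod n) (c : ℕ) (v : ZMod n) : ZMod m :=
  if (v - a).val ≤ c then 0 else (((v - a).val - c : ℕ) : ZMod m)

/-- The contraction of a graph along a surjection-style projection `p`: distinct vertices
`a`, `b` are adjacent iff some preimages of them are adjacent. -/
def contractGraph {V W : Type*} (G : SimpleGraph V) (p : V → W) : SimpleGraph W where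
  Adj a b := a ≠ b ∧ ∃ u v : V, p u = a ∧ p v = b ∧ G.Adj u v
  symm := by
    constructor
    rintro a b ⟨hab, u, v, hu, hv, huv⟩
    exact ⟨hab.symm, v, u, hv, hu, huv.symm⟩
  loopless := by constructor; rintro a ⟨h, -⟩; exact h rfl

set_option linter.unusedSectionVars false
set_option maxHeartbeats 1000000

section Tools
variable {N : ℕ} [NeZero N]

lemma cast_val_eq (a : ZMod N) : ((a.val : ℕ) : ZMod N) = a := by
  rw [ZMod.natCast_val, ZMod.cast_id]

lemma natCast_inj_zmod {i j : ℕ} (hi : i < N) (hj : j < N) :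
    ((i : ZMod N) = (j : ZMod N)) ↔ i = j := by
  rw [ZMod.natCast_eq_natCast_iff', Nat.mod_eq_of_lt hi, Nat.mod_eq_of_lt hj]

lemma shift_eq_iff (β : ZMod N) {i j : ℕ} (hi : i < N) (hj : j < N) :
    β + (i : ZMod N) = β + (j : ZMod N) ↔ i = j := by
  rw [add_right_inj, natCast_inj_zmod hi hj]

lemma val_shift (β : ZMod N) {i j : ℕ} (hi : i < N) (hj : j < N) :
    ((β + (i : ZMod N)) - (β + (j : ZMod N))).val
      = if j ≤ i then i - j else N - (j - i) := by
  have h0 : 0 < N := Nat.pos_of_ne_zero (NeZero.ne N)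
  have h : (β + (i : ZMod N)) - (β + (j : ZMod N)) = ((i : ZMod N)) - j := by ring
  rw [h]
  rcases le_or_gt j i with hji | hji
  · have h2 : (i : ZMod N) - j = ((i - j : ℕ) : ZMod N) := by
      rw [Nat.cast_sub hji]
    rw [h2, ZMod.val_natCast, Nat.mod_eq_of_lt (by omega), if_pos hji]
  · have h2 : (i : ZMod N) - j = ((N - (j - i) : ℕ) : ZMod N) := by
      have hN : ((N : ℕ) : ZMod N) = 0 := ZMod.natCast_self N
      have h3 : ((N - (j - i) : ℕ) : ZMod N) = (N : ZMod N) - ((j - i : ℕ) : ZMod N) := by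
        rw [← Nat.cast_sub (by omega)]
      rw [h3, hN, Nat.cast_sub (le_of_lt hji)]
      ring
    rw [h2, ZMod.val_natCast, Nat.mod_eq_of_lt (by omega), if_neg (by omega)]

lemma shift_succ (β : ZMod N) (i : ℕ) :
    (β + (i : ZMod N)) + 1 = β + ((i + 1 : ℕ) : ZMod N) := by push_cast; ring

lemma succ_iff (β : ZMod N) {i j : ℕ} (hi : i < N) (hj : j < N) :
    β + (j : ZMod N) = (β + (i : ZMod N)) + 1 ↔ (j = i + 1 ∨ (i = N - 1 ∧ j = 0)) := by
  have h0 : 0 < N := Nat.pos_of_ne_zero (NeZero.ne N)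
  rw [shift_succ]
  constructor
  · intro h
    have h2 : (j : ZMod N) = ((i+1 : ℕ) : ZMod N) := add_left_cancel h
    have h3 := congrArg ZMod.val h2
    rw [ZMod.val_natCast, ZMod.val_natCast, Nat.mod_eq_of_lt hj] at h3
    rcases lt_or_ge (i+1) N with h4 | h4
    · rw [Nat.mod_eq_of_lt h4] at h3; omega
    · have h5 : i + 1 = N := by omega
      rw [h5, Nat.mod_self] at h3; omega
  · rintro (rfl | ⟨rfl, rfl⟩)
    · rfl
    · congr 1
      have h6 : (N - 1) + 1 = N := by omega
      rw [h6]
      simp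

lemma shift_ne (β : ZMod N) {i j : ℕ} (hi : i < N) (hj : j < N) (hij : i ≠ j) :
    β + (i : ZMod N) ≠ β + (j : ZMod N) := fun h => hij ((shift_eq_iff β hi hj).mp h)

end Tools

lemma crosses_of_pattern {N : ℕ} [NeZero N] (β : ZMod N) {i k j l : ℕ}
    (h1 : i < k) (h2 : k < j) (h3 : j < l) (h4 : l < N) :
    Crosses N s(β + (i : ZMod N), β + (j : ZMod N)) s(β + (k : ZMod N), β + (l : ZMod N)) := by
  have hi : i < N := by omega
  have hj : j < N := by omega
  have hk : k < N := by omega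
  refine ⟨β + (i:ZMod N), β + (j:ZMod N), β + (k:ZMod N), β + (l:ZMod N),
    rfl, rfl, ?_, ?_, ?_, ?_, ?_⟩
  · exact shift_ne β hi hk (by omega)
  · exact shift_ne β hi h4 (by omega)
  · exact shift_ne β hj hk (by omega)
  · exact shift_ne β hj h4 (by omega)
  · left
    constructor
    · constructor
      · rw [val_shift β hk hi]; simp only [if_pos (le_of_lt h1)]; omega
      · rw [val_shift β hk hi, val_shift β hj hi]
        simp only [if_pos (le_of_lt h1), if_pos (by omega : i ≤ j)]; omega
    · intro ha
      obtain ⟨ha1, hb⟩ := ha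
      rw [val_shift β h4 hi, val_shift β hj hi] at hb
      simp only [if_pos (by omega : i ≤ l), if_pos (by omega : i ≤ j)] at hb
      omega

lemma interval_bound (M : ℕ) (F : Finset (ℕ × ℕ))
    (hF : ∀ p ∈ F, p.1 + 2 ≤ p.2 ∧ p.2 ≤ M)
    (hnc : ∀ p ∈ F, ∀ q ∈ F, ¬(p.1 < q.1 ∧ q.1 < p.2 ∧ p.2 < q.2)) :
    F.card ≤ M - 1 := by
  classical
  induction M using Nat.strong_induction_on generalizing F with
  | _ M ih =>
  rcases F.eq_empty_or_nonempty with rfl | hne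
  · simp
  obtain ⟨I, hI, hmin⟩ := F.exists_min_image (fun p => p.2 - p.1) hne
  obtain ⟨hIlen, hIM⟩ := hF I hI
  have hfree : ∀ q ∈ F, q ≠ I →
      (q.1 ≤ I.1 ∨ I.2 ≤ q.1) ∧ (q.2 ≤ I.1 ∨ I.2 ≤ q.2) := by
    intro q hq hqI
    have hq' := hF q hq
    have hm := hmin q hq
    constructor
    · by_contra h; push_neg at h
      obtain ⟨h1, h2⟩ := h
      have hq2 : q.2 ≤ I.2 := by
        by_contra h3
        exact hnc I hI q hq ⟨by omega, by omega, by omega⟩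
      omega
    · by_contra h; push_neg at h
      obtain ⟨h1, h2⟩ := h
      have hq1 : I.1 ≤ q.1 := by
        by_contra h3; push_neg at h3
        exact hnc q hq I hI ⟨by omega, by omega, by omega⟩
      omega
  set δ : ℕ → ℕ := fun x => if I.1 + 2 ≤ x then x - 1 else x with hδ
  have hep : ∀ q ∈ F, q.1 ≠ I.1 + 1 ∧ q.2 ≠ I.1 + 1 := by
    intro q hq
    by_cases hqI : q = I
    · subst hqI; omega
    · have h1 := hfree q hq hqI
      have h2 := (hF q hq).1
      omega
  have hδmono : ∀ a b : ℕ, a ≠ I.1+1 → b ≠ I.1+1 → (a < b ↔ δ a < δ b) := by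
    intro a b ha hb; simp only [hδ]; split_ifs <;> omega
  have hinj : ∀ q ∈ F, ∀ q' ∈ F, (δ q.1, δ q.2) = (δ q'.1, δ q'.2) → q = q' := by
    intro q hq q' hq' h
    rw [Prod.mk.injEq] at h
    obtain ⟨ha, hb⟩ := h
    have e1 := hep q hq
    have e2 := hep q' hq'
    have j1 : q.1 = q'.1 := by
      simp only [hδ] at ha; split_ifs at ha <;> omega
    have j2 : q.2 = q'.2 := by
      simp only [hδ] at hb; split_ifs at hb <;> omega
    exact Prod.ext j1 j2
  have hM2 : 2 ≤ M := by omega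
  by_cases hcase : I.2 = I.1 + 2
  · set F' := (F.erase I).image (fun p => (δ p.1, δ p.2)) with hF'
    have hcard : F'.card = F.card - 1 := by
      rw [hF', Finset.card_image_of_injOn, Finset.card_erase_of_mem hI]
      intro p hp q hq h
      exact hinj p (Finset.mem_of_mem_erase hp) q (Finset.mem_of_mem_erase hq) h
    have hbound : F'.card ≤ (M - 1) - 1 := by
      apply ih (M-1) (by omega)
      · intro p' hp'
        simp only [hF', Finset.mem_image] at hp'
        obtain ⟨q, hq, rfl⟩ := hp'
        have hqF := Finset.mem_of_mem_erase hq
        have hqI : q ≠ I := Finset.ne_of_mem_erase hq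
        have h1 := hfree q hqF hqI
        have h2 := hF q hqF
        have h3 : ¬(q.1 = I.1 ∧ q.2 = I.2) := by
          intro h; exact hqI (Prod.ext h.1 h.2)
        simp only [hδ]; constructor
        · split_ifs <;> omega
        · split_ifs <;> omega
      · intro p' hp' q' hq'
        simp only [hF', Finset.mem_image] at hp' hq'
        obtain ⟨p, hp, rfl⟩ := hp'
        obtain ⟨q, hq, rfl⟩ := hq'
        have hpF := Finset.mem_of_mem_erase hp
        have hqF := Finset.mem_of_mem_erase hq
        intro hc
        obtain ⟨c1, c2, c3⟩ := hc
        have e1 := hep p hpF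
        have e2 := hep q hqF
        exact hnc p hpF q hqF ⟨(hδmono _ _ e1.1 e2.1).mpr c1,
          (hδmono _ _ e2.1 e1.2).mpr c2, (hδmono _ _ e1.2 e2.2).mpr c3⟩
    omega
  · set F' := F.image (fun p => (δ p.1, δ p.2)) with hF'
    have hcard : F'.card = F.card := by
      rw [hF', Finset.card_image_of_injOn]
      intro p hp q hq h
      exact hinj p hp q hq h
    have hbound : F'.card ≤ (M - 1) - 1 := by
      apply ih (M-1) (by omega)
      · intro p' hp'
        simp only [hF', Finset.mem_image] at hp'
        obtain ⟨q, hq, rfl⟩ := hp'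
        have h2 := hF q hq
        by_cases hqI : q = I
        · subst hqI
          simp only [hδ]
          constructor
          · split_ifs <;> omega
          · split_ifs <;> omega
        · have h1 := hfree q hq hqI
          simp only [hδ]
          constructor
          · split_ifs <;> omega
          · split_ifs <;> omega
      · intro p' hp' q' hq'
        simp only [hF', Finset.mem_image] at hp' hq'
        obtain ⟨p, hp, rfl⟩ := hp'
        obtain ⟨q, hq, rfl⟩ := hq'
        intro hc
        obtain ⟨c1, c2, c3⟩ := hc
        have e1 := hep p hp
        have e2 := hep q hq
        exact hnc p hp q hq ⟨(hδmono _ _ e1.1 e2.1).mpr c1,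
          (hδmono _ _ e2.1 e1.2).mpr c2, (hδmono _ _ e1.2 e2.2).mpr c3⟩
    omega

lemma mog_adj {N : ℕ} (D : Finset (Sym2 (ZMod N))) (u v : ZMod N) :
    (mog N D).Adj u v ↔ ((∃ i : ZMod N, s(u,v) = s(i, i+1)) ∨ s(u,v) ∈ D) ∧ u ≠ v := by
  simp only [mog, SimpleGraph.fromEdgeSet_adj, Set.mem_union, Set.mem_setOf_eq,
    Finset.mem_coe]

lemma val_sub_cast {N : ℕ} [NeZero N] {i j : ℕ} (hi : i < N) (hj : j < N) :
    (((i : ZMod N)) - (j : ZMod N)).val = if j ≤ i then i - j else N - (j - i) := by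
  have h := val_shift (0 : ZMod N) hi hj
  simpa using h

lemma inArc_cast {N : ℕ} [NeZero N] {p q x : ℕ} (hp : p < N) (hq : q < N) (hx : x < N) :
    InArc N (p : ZMod N) (q : ZMod N) (x : ZMod N) ↔
      ((p < x ∧ (q < p ∨ x < q)) ∨ (x < p ∧ x < q ∧ q < p)) := by
  unfold InArc
  rw [val_sub_cast hx hp, val_sub_cast hq hp]
  split_ifs <;> omega

lemma natCast_eq_iff_of_le {N : ℕ} [NeZero N] {p q : ℕ} (hp : p ≤ N) (hq : q ≤ N) :
    ((p : ZMod N) = (q : ZMod N)) ↔ (p = q ∨ (p = 0 ∧ q = N) ∨ (p = N ∧ q = 0)) := by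
  have h0 : 0 < N := Nat.pos_of_ne_zero (NeZero.ne N)
  rw [ZMod.natCast_eq_natCast_iff']
  have hp' : p % N = if p = N then 0 else p := by
    rcases eq_or_lt_of_le hp with rfl | h
    · simp
    · rw [Nat.mod_eq_of_lt h, if_neg (by omega)]
  have hq' : q % N = if q = N then 0 else q := by
    rcases eq_or_lt_of_le hq with rfl | h
    · simp
    · rw [Nat.mod_eq_of_lt h, if_neg (by omega)]
  rw [hp', hq']
  split_ifs <;> omega

lemma not_deg2_of_three {V : Type*} [Finite V] (G : SimpleGraph V) (v a b c : V)
    (ha : G.Adj v a) (hb : G.Adj v b) (hc : G.Adj v c)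
    (hab : a ≠ b) (hac : a ≠ c) (hbc : b ≠ c) : ¬ Deg2 G v := by
  intro h
  have hsub : ({a, b, c} : Set V) ⊆ G.neighborSet v := by
    intro x hx
    rcases hx with rfl | rfl | rfl
    exacts [ha, hb, hc]
  have h3 : ({a, b, c} : Set V).ncard = 3 := Set.ncard_eq_three.mpr ⟨a, b, c, hab, hac, hbc, rfl⟩
  have hle := Set.ncard_le_ncard hsub (Set.toFinite _)
  unfold Deg2 at h
  omega

lemma nbhd_eq_pair_of_deg2 {V : Type*} [Finite V] {G : SimpleGraph V} {v a b : V}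
    (hd : Deg2 G v) (ha : G.Adj v a) (hb : G.Adj v b) (hab : a ≠ b) :
    G.neighborSet v = {a, b} := by
  symm
  apply Set.eq_of_subset_of_ncard_le
  · intro x hx
    rcases hx with rfl | rfl
    exacts [ha, hb]
  · unfold Deg2 at hd
    rw [hd, Set.ncard_pair hab]
  · exact Set.toFinite _

/-- Claim 2, second case. If the diagonals `{v_r, v_{r+2}}`,
`{v_{r+2}, v_{r+5}}` and `{v_r, v_{r+5}}` all lie in `D` and both `v_{r+1}` and `v_{r+4}`
have degree 2 in `G`, then contracting the four vertices `v_{r+1}, …, v_{r+4}` to a single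
new vertex `x` (realized via the projection collapsing that arc to `0 ∈ ℤ/(n-3)ℤ`) yields
a maximal outerplane graph `G'` on `n - 3` vertices in which `x` has degree 2 and is
adjacent to (the images of) `v_r` and `v_{r+5}`, with `k(G') ≤ k(G) - 1` and
`γ(G) ≤ γ(G') + 1`. -/
theorem statement9 (n : ℕ) (hn : 7 ≤ n) (D : Finset (Sym2 (ZMod n)))
    (hD : IsTriangulation n D) (r : ZMod n)
    (h1 : s(r, r + 2) ∈ D) (h2 : s(r + 2, r + 5) ∈ D) (h3 : s(r, r + 5) ∈ D)
    (hd1 : Deg2 (mog n D) (r + 1)) (hd4 : Deg2 (mog n D) (r + 4)) :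
    ∃ D' : Finset (Sym2 (ZMod (n - 3))),
      IsTriangulation (n - 3) D' ∧
      contractGraph (mog n D) (arcProj n (n - 3) (r + 1) 3) = mog (n - 3) D' ∧
      Deg2 (mog (n - 3) D') (0 : ZMod (n - 3)) ∧
      (mog (n - 3) D').Adj 0 (arcProj n (n - 3) (r + 1) 3 r) ∧
      (mog (n - 3) D').Adj 0 (arcProj n (n - 3) (r + 1) 3 (r + 5)) ∧
      numEssential (n - 3) (mog (n - 3) D') + 1 ≤ numEssential n (mog n D) ∧
      domNum (mog n D) ≤ domNum (mog (n - 3) D') + 1 := by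
  classical
  haveI : NeZero n := ⟨by omega⟩
  haveI : NeZero (n - 3) := ⟨by omega⟩
  have hnn : ((n : ℕ) : ZMod n) = 0 := ZMod.natCast_self n
  obtain ⟨b, hb⟩ : ∃ b : ZMod n, b = r + 5 := ⟨r + 5, rfl⟩
  have er0 : r = b + ((n - 5 : ℕ) : ZMod n) := by
    rw [hb, Nat.cast_sub (show 5 ≤ n by omega), hnn]; push_cast; ring
  have er1 : r + 1 = b + ((n - 4 : ℕ) : ZMod n) := by
    rw [hb, Nat.cast_sub (show 4 ≤ n by omega), hnn]; push_cast; ring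
  have er2 : r + 2 = b + ((n - 3 : ℕ) : ZMod n) := by
    rw [hb, Nat.cast_sub (show 3 ≤ n by omega), hnn]; push_cast; ring
  have er3 : r + 3 = b + ((n - 2 : ℕ) : ZMod n) := by
    rw [hb, Nat.cast_sub (show 2 ≤ n by omega), hnn]; push_cast; ring
  have er4 : r + 4 = b + ((n - 1 : ℕ) : ZMod n) := by
    rw [hb, Nat.cast_sub (show 1 ≤ n by omega), hnn]; push_cast; ring
  have er5 : r + 5 = b + ((0 : ℕ) : ZMod n) := by rw [hb]; push_cast; ring
  rw [er2, er0] at h1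
  rw [er2, er5] at h2
  rw [er5, er0] at h3
  rw [er1] at hd1
  rw [er4] at hd4
  -- A vertex of degree 2 is an endpoint of no diagonal.
  have hA1 : ∀ v u : ZMod n, Deg2 (mog n D) v → s(v, u) ∈ D → False := by
    intro v u hv he
    obtain ⟨a, c, heq, hne, hadj1, hadj2⟩ := hD.1 _ he
    have hfacts : u ≠ v ∧ v + 1 ≠ u ∧ u + 1 ≠ v := by
      rcases Sym2.eq_iff.mp heq with ⟨ha, hc⟩ | ⟨ha, hc⟩
      · subst ha; subst hc; exact ⟨fun h => hne h.symm, hadj1, hadj2⟩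
      · subst ha; subst hc; exact ⟨hne, hadj2, hadj1⟩
    have hvm : v - 1 + 1 = v := by ring
    have hsub1 : v - 1 = v + ((n-1 : ℕ) : ZMod n) := by
      rw [Nat.cast_sub (show 1 ≤ n by omega), hnn]; ring
    have hne1 : v ≠ v + 1 := by
      have := shift_ne v (i := 0) (j := 1) (by omega) (by omega) (by omega)
      simpa using this
    have hne2 : v ≠ v - 1 := by
      have := shift_ne v (i := 0) (j := n-1) (by omega) (by omega) (by omega)
      simpa [← hsub1] using this
    have hne3 : v + 1 ≠ v - 1 := by
      have := shift_ne v (i := 1) (j := n-1) (by omega) (by omega) (by omega)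
      simpa [← hsub1] using this
    have hadjA : (mog n D).Adj v (v + 1) := by
      rw [mog_adj]; exact ⟨Or.inl ⟨v, rfl⟩, hne1⟩
    have hadjB : (mog n D).Adj v (v - 1) := by
      rw [mog_adj]
      refine ⟨Or.inl ⟨v - 1, ?_⟩, hne2⟩
      rw [hvm]; exact Sym2.eq_swap
    have hadjC : (mog n D).Adj v u := by
      rw [mog_adj]; exact ⟨Or.inr he, fun h => hfacts.1 h.symm⟩
    have hu1 : u ≠ v + 1 := fun h => hfacts.2.1 h.symm
    have hu2 : u ≠ v - 1 := by
      intro h; apply hfacts.2.2; rw [h]; exact hvm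
    have hsub : ({v + 1, v - 1, u} : Set (ZMod n)) ⊆ (mog n D).neighborSet v := by
      intro x hx
      rcases hx with rfl | rfl | rfl
      · exact hadjA
      · exact hadjB
      · exact hadjC
    have h3card : ({v + 1, v - 1, u} : Set (ZMod n)).ncard = 3 :=
      Set.ncard_eq_three.mpr ⟨v+1, v-1, u, hne3, fun h => hu1 h.symm, fun h => hu2 h.symm, rfl⟩
    have hle := Set.ncard_le_ncard hsub (Set.toFinite _)
    unfold Deg2 at hv
    omega
  -- classification of diagonals
  have hd1' := hd1
  have hd4' := hd4
  have key : ∀ i j : ℕ, i < j → j < n → s(b + (i : ZMod n), b + (j : ZMod n)) ∈ D →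
      (i = n-5 ∧ j = n-3) ∨ (i = 0 ∧ j = n-3) ∨ (i = 0 ∧ j = n-2) ∨
      (i + 2 ≤ j ∧ j ≤ n - 5) := by
    intro i j hij hjn he
    have hin : i < n := by omega
    obtain ⟨a, c, heq, hne, hadj1, hadj2⟩ := hD.1 _ he
    have hfacts : (b + (i:ZMod n)) + 1 ≠ b + (j:ZMod n) ∧ (b + (j:ZMod n)) + 1 ≠ b + (i:ZMod n) := by
      rcases Sym2.eq_iff.mp heq with ⟨ha, hc⟩ | ⟨ha, hc⟩
      · rw [← ha, ← hc] at hadj1 hadj2; exact ⟨hadj1, hadj2⟩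
      · rw [← ha, ← hc] at hadj1 hadj2; exact ⟨hadj2, hadj1⟩
    have hs1 : ¬ (j = i + 1 ∨ (i = n - 1 ∧ j = 0)) := by
      intro h; exact hfacts.1 ((succ_iff b hin hjn).mpr h).symm
    have hs2 : ¬ (i = j + 1 ∨ (j = n - 1 ∧ i = 0)) := by
      intro h; exact hfacts.2 ((succ_iff b hjn hin).mpr h).symm
    by_cases hout : j ≤ n - 5
    · right; right; right; exact ⟨by omega, hout⟩
    · -- j ∈ {n-4, n-3, n-2, n-1}
      have h3' : s(b + ((0:ℕ) : ZMod n), b + ((n-5:ℕ) : ZMod n)) ∈ D := by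
        rw [Sym2.eq_swap]; exact h3
      have h2' : s(b + ((0:ℕ) : ZMod n), b + ((n-3:ℕ) : ZMod n)) ∈ D := by
        rw [Sym2.eq_swap]; exact h2
      by_cases hj4 : j = n - 4
      · exfalso
        subst hj4
        apply hA1 (b + ((n-4:ℕ) : ZMod n)) (b + (i : ZMod n)) hd1'
        rw [Sym2.eq_swap]
        exact he
      by_cases hj1 : j = n - 1
      · exfalso
        subst hj1
        apply hA1 (b + ((n-1:ℕ) : ZMod n)) (b + (i : ZMod n)) hd4'
        rw [Sym2.eq_swap]
        exact he
      by_cases hj3 : j = n - 3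
      · -- endpoint r+2
        by_cases hi5 : i = n - 5
        · exact Or.inl ⟨hi5, hj3⟩
        by_cases hi0 : i = 0
        · exact Or.inr (Or.inl ⟨hi0, hj3⟩)
        · exfalso
          have hi6 : 1 ≤ i ∧ i ≤ n - 6 := by omega
          exact hD.2.1 _ h3' _ he
            (crosses_of_pattern b (show 0 < i by omega) (show i < n - 5 by omega)
              (show n - 5 < j by omega) hjn)
      · -- j = n - 2, endpoint r+3
        have hj2 : j = n - 2 := by omega
        by_cases hi0 : i = 0
        · exact Or.inr (Or.inr (Or.inl ⟨hi0, hj2⟩))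
        by_cases hi4 : i = n - 4
        · exfalso
          subst hi4
          exact hA1 (b + ((n-4:ℕ) : ZMod n)) (b + (j : ZMod n)) hd1' he
        by_cases hi5 : i = n - 5
        · exfalso
          exact hD.2.1 _ h2' _ he
            (crosses_of_pattern b (show 0 < i by omega) (show i < n - 3 by omega)
              (show n - 3 < j by omega) hjn)
        · exfalso
          have hi6 : 1 ≤ i ∧ i ≤ n - 6 := by omega
          exact hD.2.1 _ h3' _ he
            (crosses_of_pattern b (show 0 < i by omega) (show i < n - 5 by omega)
              (show n - 5 < j by omega) hjn)
  have hbij : ∀ v : ZMod n, v = b + (((v - b).val : ℕ) : ZMod n) := by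
    intro v; rw [cast_val_eq]; ring
  have hsym2ne : ∀ i j k l : ℕ, i < n → j < n → k < n → l < n →
      (i ≠ k ∨ j ≠ l) → (i ≠ l ∨ j ≠ k) →
      s(b + (i : ZMod n), b + (j : ZMod n)) ≠ s(b + (k : ZMod n), b + (l : ZMod n)) := by
    intro i j k l hi hj hk hl hd1 hd2 h
    rcases Sym2.eq_iff.mp h with ⟨e1, e2⟩ | ⟨e1, e2⟩
    · rw [shift_eq_iff b hi hk] at e1; rw [shift_eq_iff b hj hl] at e2; tauto
    · rw [shift_eq_iff b hi hl] at e1; rw [shift_eq_iff b hj hk] at e2; tauto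
  have hclass : ∀ e ∈ D,
      e = s(b + ((n-5:ℕ) : ZMod n), b + ((n-3:ℕ) : ZMod n)) ∨
      e = s(b + ((0:ℕ) : ZMod n), b + ((n-3:ℕ) : ZMod n)) ∨
      e = s(b + ((0:ℕ) : ZMod n), b + ((n-2:ℕ) : ZMod n)) ∨
      (∃ i j : ℕ, i + 2 ≤ j ∧ j ≤ n - 5 ∧ e = s(b + (i : ZMod n), b + (j : ZMod n))) := by
    intro e he
    obtain ⟨a, c, rfl, hnea, -, -⟩ := hD.1 e he
    have ha := hbij a
    have hc := hbij c
    set i0 := (a - b).val with hi0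
    set j0 := (c - b).val with hj0
    have hi0n : i0 < n := ZMod.val_lt _
    have hj0n : j0 < n := ZMod.val_lt _
    have hne' : i0 ≠ j0 := by
      intro h; apply hnea; rw [ha, hc, h]
    rcases lt_or_gt_of_ne hne' with hlt | hgt
    · have hk := key i0 j0 hlt hj0n (by rw [← ha, ← hc]; exact he)
      rcases hk with ⟨hi, hj⟩ | ⟨hi, hj⟩ | ⟨hi, hj⟩ | ⟨hi, hj⟩
      · left; rw [ha, hc, hi, hj]
      · right; left; rw [ha, hc, hi, hj]
      · right; right; left; rw [ha, hc, hi, hj]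
      · right; right; right; exact ⟨i0, j0, hi, hj, by rw [← ha, ← hc]⟩
    · have hk := key j0 i0 hgt hi0n (by rw [← hc, ← ha, Sym2.eq_swap]; exact he)
      rcases hk with ⟨hi, hj⟩ | ⟨hi, hj⟩ | ⟨hi, hj⟩ | ⟨hi, hj⟩
      · left; rw [ha, hc, hi, hj]; exact Sym2.eq_swap
      · right; left; rw [ha, hc, hi, hj]; exact Sym2.eq_swap
      · right; right; left; rw [ha, hc, hi, hj]; exact Sym2.eq_swap
      · right; right; right; exact ⟨j0, i0, hi, hj, by rw [← ha, ← hc]; exact Sym2.eq_swap⟩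
  have hne12 : s(b + ((n-5:ℕ):ZMod n), b + ((n-3:ℕ):ZMod n)) ≠ s(b + ((0:ℕ):ZMod n), b + ((n-3:ℕ):ZMod n)) :=
    hsym2ne _ _ _ _ (by omega) (by omega) (by omega) (by omega) (by omega) (by omega)
  have hne13 : s(b + ((n-5:ℕ):ZMod n), b + ((n-3:ℕ):ZMod n)) ≠ s(b + ((0:ℕ):ZMod n), b + ((n-2:ℕ):ZMod n)) :=
    hsym2ne _ _ _ _ (by omega) (by omega) (by omega) (by omega) (by omega) (by omega)
  have hne23 : s(b + ((0:ℕ):ZMod n), b + ((n-3:ℕ):ZMod n)) ≠ s(b + ((0:ℕ):ZMod n), b + ((n-2:ℕ):ZMod n)) :=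
    hsym2ne _ _ _ _ (by omega) (by omega) (by omega) (by omega) (by omega) (by omega)
  set Tset : Finset (Sym2 (ZMod n)) :=
    {s(b + ((n-5:ℕ):ZMod n), b + ((n-3:ℕ):ZMod n)),
     s(b + ((0:ℕ):ZMod n), b + ((n-3:ℕ):ZMod n)),
     s(b + ((0:ℕ):ZMod n), b + ((n-2:ℕ):ZMod n))} with hTset
  set Dout : Finset (Sym2 (ZMod n)) := D \ Tset with hDoutdef
  have houter : ∀ e ∈ Dout, ∃ i j : ℕ, i + 2 ≤ j ∧ j ≤ n - 5 ∧
      e = s(b + (i : ZMod n), b + (j : ZMod n)) := by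
    intro e he'
    rw [hDoutdef, Finset.mem_sdiff] at he'
    rcases hclass e he'.1 with h | h | h | h
    · exfalso; apply he'.2; rw [hTset]; simp [h]
    · exfalso; apply he'.2; rw [hTset]; simp [h]
    · exfalso; apply he'.2; rw [hTset]; simp [h]
    · exact h
  have hvalb : ∀ i : ℕ, i < n → ((b + (i : ZMod n)) - b).val = i := by
    intro i hi
    have h := val_shift b (i := i) (j := 0) hi (by omega)
    simpa using h
  set g : Sym2 (ZMod n) → ℕ × ℕ := Sym2.lift
    ⟨fun x y => (min (x - b).val (y - b).val, max (x - b).val (y - b).val),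
     by intro x y; simp [min_comm, max_comm]⟩ with hg
  have hgap : ∀ i j : ℕ, i ≤ j → j < n →
      g s(b + (i : ZMod n), b + (j : ZMod n)) = (i, j) := by
    intro i j hij hjn
    rw [hg]
    simp only [Sym2.lift_mk]
    rw [hvalb i (by omega), hvalb j hjn]
    rw [min_eq_left hij, max_eq_right hij]
  set F : Finset (ℕ × ℕ) := Dout.image g with hF
  have hFcard : F.card = Dout.card := by
    rw [hF]
    apply Finset.card_image_of_injOn
    intro e he' f hf' hef
    obtain ⟨i, j, hij, hjn, rfl⟩ := houter e (Finset.mem_coe.mp he')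
    obtain ⟨k, l, hkl, hln, rfl⟩ := houter f (Finset.mem_coe.mp hf')
    rw [hgap i j (by omega) (by omega), hgap k l (by omega) (by omega)] at hef
    rw [Prod.mk.injEq] at hef
    rw [hef.1, hef.2]
  have hFbound : F.card ≤ n - 6 := by
    have hib := interval_bound (n-5) F ?_ ?_
    · omega
    · intro p hp
      rw [hF, Finset.mem_image] at hp
      obtain ⟨e, he', rfl⟩ := hp
      obtain ⟨i, j, hij, hjn, rfl⟩ := houter e he'
      rw [hgap i j (by omega) (by omega)]
      exact ⟨hij, hjn⟩
    · intro p hp q hq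
      rw [hF, Finset.mem_image] at hp hq
      obtain ⟨e, he', rfl⟩ := hp
      obtain ⟨f, hf', rfl⟩ := hq
      obtain ⟨i, j, hij, hjn, rfl⟩ := houter e he'
      obtain ⟨k, l, hkl, hln, rfl⟩ := houter f hf'
      rw [hgap i j (by omega) (by omega), hgap k l (by omega) (by omega)]
      intro hc
      obtain ⟨c1, c2, c3⟩ := hc
      simp only at c1 c2 c3
      have heD : s(b + (i : ZMod n), b + (j : ZMod n)) ∈ D :=
        (Finset.mem_sdiff.mp (hDoutdef ▸ he')).1
      have hfD : s(b + (k : ZMod n), b + (l : ZMod n)) ∈ D :=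
        (Finset.mem_sdiff.mp (hDoutdef ▸ hf')).1
      exact hD.2.1 _ heD _ hfD
        (crosses_of_pattern b c1 c2 c3 (by omega))
  have hTcard : Tset.card = 3 := by
    rw [hTset]
    rw [Finset.card_insert_of_notMem (by
        rw [Finset.mem_insert, Finset.mem_singleton]; push_neg; exact ⟨hne12, hne13⟩),
      Finset.card_insert_of_notMem (by rw [Finset.mem_singleton]; exact hne23),
      Finset.card_singleton]
  have hDoutcard : Dout.card = n - 6 := by
    have hle := Finset.le_card_sdiff Tset D
    rw [← hDoutdef] at hle
    have hD3 : D.card = n - 3 := hD.2.2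
    omega
  have hTsub : Tset ⊆ D := by
    have hinter := Finset.card_inter_add_card_sdiff D Tset
    rw [← hDoutdef] at hinter
    have hD3 : D.card = n - 3 := hD.2.2
    have hDT : (D ∩ Tset).card = 3 := by omega
    have hsubT : D ∩ Tset = Tset :=
      Finset.eq_of_subset_of_card_le Finset.inter_subset_right (by omega)
    rw [← hsubT]
    exact Finset.inter_subset_left
  have hT3 : s(b + ((0:ℕ):ZMod n), b + ((n-2:ℕ):ZMod n)) ∈ D := by
    apply hTsub
    rw [hTset]
    simp
  -- the projection
  have hphiraw : ∀ c : ℕ, c < n → arcProj n (n-3) (r+1) 3 (b + (c : ZMod n))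
      = if c ≤ n - 5 then ((c + 1 : ℕ) : ZMod (n-3)) else 0 := by
    intro c hc
    unfold arcProj
    rw [er1, val_shift b hc (by omega)]
    by_cases hcb : n - 4 ≤ c
    · rw [if_pos hcb, if_pos (by omega), if_neg (by omega)]
    · rw [if_neg hcb, if_neg (by omega), if_pos (by omega)]
      congr 1
      omega
  set φ : ZMod n → ZMod (n-3) := arcProj n (n - 3) (r + 1) 3 with hphidef
  have hphi' : ∀ c : ℕ, c ≤ n - 5 → φ (b + (c : ZMod n)) = ((c + 1 : ℕ) : ZMod (n-3)) := by
    intro c hc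
    rw [hphiraw c (by omega), if_pos hc]
  have hphi0 : ∀ c : ℕ, n - 4 ≤ c → c < n → φ (b + (c : ZMod n)) = 0 := by
    intro c hc1 hc2
    rw [hphiraw c hc2, if_neg (by omega)]
  set D' : Finset (Sym2 (ZMod (n-3))) := Dout.image (Sym2.map φ) with hD'def
  have himg : ∀ i j : ℕ, i ≤ n - 5 → j ≤ n - 5 →
      Sym2.map φ s(b + (i : ZMod n), b + (j : ZMod n))
        = s(((i+1 : ℕ) : ZMod (n-3)), ((j+1 : ℕ) : ZMod (n-3))) := by
    intro i j hi hj
    rw [Sym2.map_pair_eq, hphi' i hi, hphi' j hj]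
  have hD'mem : ∀ e' ∈ D', ∃ i j : ℕ, i + 2 ≤ j ∧ j ≤ n - 5 ∧
      e' = s(((i+1 : ℕ) : ZMod (n-3)), ((j+1 : ℕ) : ZMod (n-3))) ∧
      s(b + (i : ZMod n), b + (j : ZMod n)) ∈ D := by
    intro e' he'
    rw [hD'def, Finset.mem_image] at he'
    obtain ⟨e, he, rfl⟩ := he'
    obtain ⟨i, j, hij, hjn, rfl⟩ := houter e he
    refine ⟨i, j, hij, hjn, ?_, (Finset.mem_sdiff.mp (hDoutdef ▸ he)).1⟩
    rw [himg i j (by omega) hjn]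
  have hD'diag : ∀ e' ∈ D', IsDiagonal (n-3) e' := by
    intro e' he'
    obtain ⟨i, j, hij, hjn, rfl, -⟩ := hD'mem e' he'
    refine ⟨_, _, rfl, ?_, ?_, ?_⟩
    · intro h
      rw [natCast_eq_iff_of_le (by omega) (by omega)] at h
      omega
    · intro h
      have h2 : ((i + 2 : ℕ) : ZMod (n-3)) = ((j + 1 : ℕ) : ZMod (n-3)) := by
        push_cast at h ⊢; linear_combination h
      rw [natCast_eq_iff_of_le (by omega) (by omega)] at h2
      omega
    · intro h
      have h2 : ((j + 2 : ℕ) : ZMod (n-3)) = ((i + 1 : ℕ) : ZMod (n-3)) := by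
        push_cast at h ⊢; linear_combination h
      rw [natCast_eq_iff_of_le (by omega) (by omega)] at h2
      omega
  have hnointer : ∀ i j k l : ℕ, j ≤ n-5 → l ≤ n-5 →
      s(b + (i : ZMod n), b + (j : ZMod n)) ∈ D → s(b + (k : ZMod n), b + (l : ZMod n)) ∈ D →
      ¬ (i < k ∧ k < j ∧ j < l) := by
    intro i j k l hj hl he hf hc
    exact hD.2.1 _ he _ hf (crosses_of_pattern b hc.1 hc.2.1 hc.2.2 (by omega))
  have hcne : ∀ s t : ℕ, ((s+1 : ℕ) : ZMod (n-3)) ≠ ((t+1 : ℕ) : ZMod (n-3)) → s ≠ t := by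
    intro s t hne h
    subst h
    exact hne rfl
  have hD'noncross : ∀ e' ∈ D', ∀ f' ∈ D', ¬ Crosses (n-3) e' f' := by
    intro e' he' f' hf' hcr
    obtain ⟨i, j, hij, hjn, rfl, heD⟩ := hD'mem e' he'
    obtain ⟨k, l, hkl, hln, rfl, hfD⟩ := hD'mem f' hf'
    obtain ⟨a', b', c', d', hee, hff, ne1, ne2, ne3, ne4, hxor⟩ := hcr
    have hpat : (i < k ∧ k < j ∧ j < l) ∨ (k < i ∧ i < l ∧ l < j) := by
      rcases Sym2.eq_iff.mp hee with ⟨ha, hbb⟩ | ⟨ha, hbb⟩ <;>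
        rcases Sym2.eq_iff.mp hff with ⟨hc, hd⟩ | ⟨hc, hd⟩ <;>
        subst ha <;> subst hbb <;> subst hc <;> subst hd
      · have d1 := hcne _ _ ne1; have d2 := hcne _ _ ne2
        have d3 := hcne _ _ ne3; have d4 := hcne _ _ ne4
        rw [inArc_cast (by omega) (by omega) (by omega),
            inArc_cast (by omega) (by omega) (by omega)] at hxor
        rcases hxor with ⟨hA, hB⟩ | ⟨hA, hB⟩ <;> omega
      · have d1 := hcne _ _ ne1; have d2 := hcne _ _ ne2
        have d3 := hcne _ _ ne3; have d4 := hcne _ _ ne4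
        rw [inArc_cast (by omega) (by omega) (by omega),
            inArc_cast (by omega) (by omega) (by omega)] at hxor
        rcases hxor with ⟨hA, hB⟩ | ⟨hA, hB⟩ <;> omega
      · have d1 := hcne _ _ ne1; have d2 := hcne _ _ ne2
        have d3 := hcne _ _ ne3; have d4 := hcne _ _ ne4
        rw [inArc_cast (by omega) (by omega) (by omega),
            inArc_cast (by omega) (by omega) (by omega)] at hxor
        rcases hxor with ⟨hA, hB⟩ | ⟨hA, hB⟩ <;> omega
      · have d1 := hcne _ _ ne1; have d2 := hcne _ _ ne2
        have d3 := hcne _ _ ne3; have d4 := hcne _ _ ne4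
        rw [inArc_cast (by omega) (by omega) (by omega),
            inArc_cast (by omega) (by omega) (by omega)] at hxor
        rcases hxor with ⟨hA, hB⟩ | ⟨hA, hB⟩ <;> omega
    rcases hpat with hp | hp
    · exact hnointer i j k l hjn hln heD hfD hp
    · exact hnointer k l i j hln hjn hfD heD hp
  have hD'card : D'.card = (n-3) - 3 := by
    rw [hD'def, Finset.card_image_of_injOn, hDoutcard]
    · omega
    · intro e he' f hf' hef
      obtain ⟨i, j, hij, hjn, rfl⟩ := houter e (Finset.mem_coe.mp he')
      obtain ⟨k, l, hkl, hln, rfl⟩ := houter f (Finset.mem_coe.mp hf')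
      rw [himg i j (by omega) hjn, himg k l (by omega) hln] at hef
      rcases Sym2.eq_iff.mp hef with ⟨ha, hbb⟩ | ⟨ha, hbb⟩
      · rw [natCast_eq_iff_of_le (by omega) (by omega)] at ha
        rw [natCast_eq_iff_of_le (by omega) (by omega)] at hbb
        have hik : i = k := by omega
        have hjl : j = l := by omega
        rw [hik, hjl]
      · rw [natCast_eq_iff_of_le (by omega) (by omega)] at ha
        rw [natCast_eq_iff_of_le (by omega) (by omega)] at hbb
        omega
  have hT' : IsTriangulation (n-3) D' := ⟨hD'diag, hD'noncross, hD'card⟩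
  have hadjcons : ∀ c1 c2 : ℕ, c1 < n → c2 < n → (c2 = c1 + 1 ∨ (c1 = n-1 ∧ c2 = 0)) →
      (mog n D).Adj (b + (c1 : ZMod n)) (b + (c2 : ZMod n)) := by
    intro c1 c2 hc1 hc2 h
    have hsucc : b + (c2 : ZMod n) = (b + (c1 : ZMod n)) + 1 := (succ_iff b hc1 hc2).mpr h
    rw [mog_adj]
    exact ⟨Or.inl ⟨b + (c1 : ZMod n), by rw [hsucc]⟩, shift_ne b hc1 hc2 (by omega)⟩
  have hcast13 : ((n - 3 : ℕ) : ZMod (n - 3)) = 0 := ZMod.natCast_self _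
  have hzero1 : (0 : ZMod (n-3)) = ((n-4 : ℕ) : ZMod (n-3)) + 1 := by
    rw [show ((n-4:ℕ) : ZMod (n-3)) + 1 = ((n-4+1 : ℕ) : ZMod (n-3)) by push_cast; ring,
      show n-4+1 = n-3 by omega, hcast13]
  have hone : ((1:ℕ) : ZMod (n-3)) = 0 + 1 := by push_cast; ring
  have hbd : ∀ cu : ℕ, cu < n → φ (b + (cu : ZMod n)) ≠ φ ((b + (cu : ZMod n)) + 1) →
      ∃ i' : ZMod (n-3), s(φ (b + (cu : ZMod n)), φ ((b + (cu : ZMod n)) + 1)) = s(i', i' + 1) := by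
    intro cu hcu hnec
    by_cases hwrap : cu = n - 1
    · subst hwrap
      have hv : (b + ((n-1 : ℕ) : ZMod n)) + 1 = b + ((0:ℕ) : ZMod n) :=
        ((succ_iff b (by omega) (by omega)).mpr (Or.inr ⟨rfl, rfl⟩)).symm
      rw [hv, hphi0 (n-1) (by omega) (by omega), hphi' 0 (by omega)]
      refine ⟨0, ?_⟩
      rw [show (0+1 : ℕ) = 1 by omega, hone]
    · have hv : (b + ((cu : ℕ) : ZMod n)) + 1 = b + ((cu + 1 : ℕ) : ZMod n) := shift_succ b cu
      rw [hv]
      by_cases h6 : cu ≤ n - 6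
      · rw [hphi' cu (by omega), hphi' (cu+1) (by omega)]
        refine ⟨((cu+1 : ℕ) : ZMod (n-3)), ?_⟩
        rw [show ((cu+1+1 : ℕ) : ZMod (n-3)) = ((cu+1 : ℕ) : ZMod (n-3)) + 1 by push_cast; ring]
      · by_cases h5 : cu = n - 5
        · subst h5
          rw [hphi' (n-5) (by omega), hphi0 (n-5+1) (by omega) (by omega)]
          refine ⟨((n-5+1 : ℕ) : ZMod (n-3)), ?_⟩
          rw [show n-5+1 = n-4 by omega, ← hzero1]
        · exfalso
          apply hnec
          rw [hv, hphi0 cu (by omega) hcu, hphi0 (cu+1) (by omega) (by omega)]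
  have hnotT : ∀ i j : ℕ, i + 2 ≤ j → j ≤ n - 5 →
      s(b + (i : ZMod n), b + (j : ZMod n)) ∈ D →
      s(b + (i : ZMod n), b + (j : ZMod n)) ∈ Dout := by
    intro i j hij hjn hmem
    rw [hDoutdef, Finset.mem_sdiff]
    refine ⟨hmem, ?_⟩
    rw [hTset]
    intro hT
    rcases Finset.mem_insert.mp hT with h' | hT2
    · exact hsym2ne i j (n-5) (n-3) (by omega) (by omega) (by omega) (by omega)
        (by omega) (by omega) h'
    rcases Finset.mem_insert.mp hT2 with h' | hT3
    · exact hsym2ne i j 0 (n-3) (by omega) (by omega) (by omega) (by omega)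
        (by omega) (by omega) h'
    · exact hsym2ne i j 0 (n-2) (by omega) (by omega) (by omega) (by omega)
        (by omega) (by omega) (Finset.mem_singleton.mp hT3)
  have hgeq : contractGraph (mog n D) φ = mog (n - 3) D' := by
    ext u' v'
    constructor
    · rintro ⟨hne, u, v, rfl, rfl, huv⟩
      rw [mog_adj] at huv
      rw [mog_adj]
      refine ⟨?_, hne⟩
      obtain ⟨hedge, hneuv⟩ := huv
      rcases hedge with ⟨i, hi⟩ | hmem
      · left
        rcases Sym2.eq_iff.mp hi with ⟨rfl, rfl⟩ | ⟨h1, h2⟩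
        · have hib := hbij u
          rw [hib] at hne ⊢
          exact hbd _ (ZMod.val_lt _) hne
        · rw [h1, h2] at hne ⊢
          have hib := hbij i
          rw [hib] at hne ⊢
          obtain ⟨i2, hi2⟩ := hbd _ (ZMod.val_lt _) (Ne.symm hne)
          exact ⟨i2, Sym2.eq_swap.trans hi2⟩
      · rcases hclass _ hmem with h | h | h | ⟨i, j, hij, hjn, h⟩
        · left
          have himg2 : s(φ u, φ v) = s(((n-4:ℕ) : ZMod (n-3)), (0 : ZMod (n-3))) := by
            rw [← Sym2.map_pair_eq φ u v, h, Sym2.map_pair_eq, hphi' (n-5) (by omega),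
              hphi0 (n-3) (by omega) (by omega), show n-5+1 = n-4 by omega]
          refine ⟨((n-4:ℕ) : ZMod (n-3)), ?_⟩
          rw [himg2, hzero1]
        · left
          have himg2 : s(φ u, φ v) = s(((1:ℕ) : ZMod (n-3)), (0 : ZMod (n-3))) := by
            rw [← Sym2.map_pair_eq φ u v, h, Sym2.map_pair_eq, hphi' 0 (by omega),
              hphi0 (n-3) (by omega) (by omega)]
          refine ⟨0, ?_⟩
          rw [himg2, hone]
          exact Sym2.eq_swap
        · left
          have himg2 : s(φ u, φ v) = s(((1:ℕ) : ZMod (n-3)), (0 : ZMod (n-3))) := by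
            rw [← Sym2.map_pair_eq φ u v, h, Sym2.map_pair_eq, hphi' 0 (by omega),
              hphi0 (n-2) (by omega) (by omega)]
          refine ⟨0, ?_⟩
          rw [himg2, hone]
          exact Sym2.eq_swap
        · right
          rw [hD'def, Finset.mem_image]
          refine ⟨s(b + (i : ZMod n), b + (j : ZMod n)), hnotT i j hij hjn (h ▸ hmem), ?_⟩
          rw [← h, Sym2.map_pair_eq]
    · intro hadj
      rw [mog_adj] at hadj
      obtain ⟨hedge, hne'⟩ := hadj
      refine ⟨hne', ?_⟩
      rcases hedge with ⟨i', hi'⟩ | hmem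
      · have hpre : ∃ u v : ZMod n, φ u = i' ∧ φ v = i' + 1 ∧ (mog n D).Adj u v := by
          have htlt : i'.val < n - 3 := ZMod.val_lt _
          have hi'c : i' = ((i'.val : ℕ) : ZMod (n-3)) := (cast_val_eq i').symm
          have hsucccast : ∀ w : ZMod (n-3), ((w.val + 1 : ℕ) : ZMod (n-3)) = w + 1 := by
            intro w; push_cast; rw [cast_val_eq]
          by_cases ht0 : i'.val = 0
          · have hi00 : i' = 0 := (ZMod.val_eq_zero i').mp ht0
            refine ⟨b + ((n-1 : ℕ) : ZMod n), b + ((0:ℕ) : ZMod n), ?_, ?_,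
              hadjcons (n-1) 0 (by omega) (by omega) (Or.inr ⟨rfl, rfl⟩)⟩
            · rw [hphi0 (n-1) (by omega) (by omega), hi00]
            · rw [hphi' 0 (by omega), hi00]
              norm_num
          · by_cases htm : i'.val = n - 4
            · have hi4 : i' = ((n-4:ℕ) : ZMod (n-3)) := by
                rw [← htm]; exact (cast_val_eq i').symm
              refine ⟨b + ((n-5:ℕ) : ZMod n), b + ((n-4:ℕ) : ZMod n), ?_, ?_,
                hadjcons (n-5) (n-4) (by omega) (by omega) (by omega)⟩
              · rw [hphi' (n-5) (by omega), show n-5+1 = n-4 by omega, ← hi4]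
              · rw [hphi0 (n-4) (by omega) (by omega), hi4]
                exact hzero1
            · refine ⟨b + ((i'.val - 1 : ℕ) : ZMod n), b + ((i'.val : ℕ) : ZMod n), ?_, ?_,
                hadjcons (i'.val - 1) i'.val (by omega) (by omega) (by omega)⟩
              · rw [hphi' (i'.val - 1) (by omega), show i'.val - 1 + 1 = i'.val by omega]
                exact cast_val_eq i'
              · rw [hphi' i'.val (by omega)]
                exact hsucccast i'
        obtain ⟨u, v, hu, hv, huv⟩ := hpre
        rcases Sym2.eq_iff.mp hi' with ⟨e1, e2⟩ | ⟨e1, e2⟩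
        · exact ⟨u, v, by rw [hu, e1], by rw [hv, e2], huv⟩
        · exact ⟨v, u, by rw [hv, ← e1], by rw [hu, ← e2], huv.symm⟩
      · rw [hD'def, Finset.mem_image] at hmem
        obtain ⟨e, he, hmape⟩ := hmem
        obtain ⟨i, j, hij, hjn, rfl⟩ := houter e he
        rw [himg i j (by omega) hjn] at hmape
        have hD0 : s(b + (i : ZMod n), b + (j : ZMod n)) ∈ D :=
          (Finset.mem_sdiff.mp (hDoutdef ▸ he)).1
        have hadjuv : (mog n D).Adj (b + (i : ZMod n)) (b + (j : ZMod n)) := by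
          rw [mog_adj]
          exact ⟨Or.inr hD0, shift_ne b (by omega) (by omega) (by omega)⟩
        rcases Sym2.eq_iff.mp hmape with ⟨e1, e2⟩ | ⟨e1, e2⟩
        · exact ⟨b + (i : ZMod n), b + (j : ZMod n),
            by rw [hphi' i (by omega)]; exact e1, by rw [hphi' j hjn]; exact e2, hadjuv⟩
        · exact ⟨b + (j : ZMod n), b + (i : ZMod n),
            by rw [hphi' j hjn]; exact e2, by rw [hphi' i (by omega)]; exact e1, hadjuv.symm⟩
  have hcne0 : ∀ t : ℕ, 1 ≤ t → t ≤ n - 4 → (0 : ZMod (n-3)) ≠ ((t : ℕ) : ZMod (n-3)) := by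
    intro t ht1 ht2 h
    rw [show (0 : ZMod (n-3)) = ((0:ℕ) : ZMod (n-3)) by norm_num,
      natCast_eq_iff_of_le (by omega) (by omega)] at h
    omega
  have hcnec : ∀ s t : ℕ, s ≤ n-4 → t ≤ n-4 → s ≠ t →
      ((s : ℕ) : ZMod (n-3)) ≠ ((t : ℕ) : ZMod (n-3)) := by
    intro s t hs ht hst h
    rw [natCast_eq_iff_of_le (by omega) (by omega)] at h
    omega
  have hnb0 : (mog (n-3) D').neighborSet 0
      = {((1:ℕ) : ZMod (n-3)), ((n-4:ℕ) : ZMod (n-3))} := by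
    ext x
    simp only [SimpleGraph.mem_neighborSet, Set.mem_insert_iff, Set.mem_singleton_iff]
    constructor
    · intro hx
      rw [mog_adj] at hx
      obtain ⟨hedge, hne0⟩ := hx
      rcases hedge with ⟨i', hi'⟩ | hmem
      · rcases Sym2.eq_iff.mp hi' with ⟨e1, e2⟩ | ⟨e1, e2⟩
        · left
          rw [e2, ← e1]
          exact hone.symm
        · right
          linear_combination e2 - e1 + hzero1
      · exfalso
        obtain ⟨i, j, hij, hjn, heq', -⟩ := hD'mem _ hmem
        rcases Sym2.eq_iff.mp heq' with ⟨e1, -⟩ | ⟨e1, -⟩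
        · exact hcne0 (i+1) (by omega) (by omega) e1
        · exact hcne0 (j+1) (by omega) (by omega) e1
    · intro hx
      rw [mog_adj]
      rcases hx with rfl | rfl
      · exact ⟨Or.inl ⟨0, by rw [← hone]⟩, hcne0 1 (by omega) (by omega)⟩
      · exact ⟨Or.inl ⟨((n-4:ℕ) : ZMod (n-3)), by rw [← hzero1]; exact Sym2.eq_swap⟩,
          hcne0 (n-4) (by omega) (by omega)⟩
  have hdeg2'0 : Deg2 (mog (n-3) D') 0 := by
    unfold Deg2
    rw [hnb0]
    exact Set.ncard_pair (hcnec 1 (n-4) (by omega) (by omega) (by omega))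
  have hphir : φ r = ((n-4:ℕ) : ZMod (n-3)) := by
    rw [er0, hphi' (n-5) (by omega), show n-5+1 = n-4 by omega]
  have hphir5 : φ (r+5) = ((1:ℕ) : ZMod (n-3)) := by
    rw [er5, hphi' 0 (by omega)]
  have hadj0r : (mog (n-3) D').Adj 0 (φ r) := by
    have : φ r ∈ (mog (n-3) D').neighborSet 0 := by
      rw [hnb0, hphir]
      right
      rfl
    exact this
  have hadj0r5 : (mog (n-3) D').Adj 0 (φ (r+5)) := by
    have : φ (r+5) ∈ (mog (n-3) D').neighborSet 0 := by
      rw [hnb0, hphir5]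
      left
      rfl
    exact this
  have hfib : ∀ v : ZMod n, ∀ c : ℕ, c ≤ n-5 → φ v = ((c+1 : ℕ) : ZMod (n-3)) →
      v = b + (c : ZMod n) := by
    intro v c hc hv
    have hbv := hbij v
    have hcv : (v - b).val < n := ZMod.val_lt _
    rw [hbv] at hv ⊢
    by_cases h5 : (v - b).val ≤ n - 5
    · rw [hphi' _ h5, natCast_eq_iff_of_le (by omega) (by omega)] at hv
      have hvc : (v - b).val = c := by omega
      rw [hvc]
    · exfalso
      rw [hphi0 _ (by omega) hcv] at hv
      exact hcne0 (c+1) (by omega) (by omega) hv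
  have tr1 : ∀ c1 c2 : ℕ, c1 ≤ n-5 → c2 ≤ n-5 → c1 ≠ c2 →
      (mog n D).Adj (b + (c1 : ZMod n)) (b + (c2 : ZMod n)) →
      (mog (n-3) D').Adj ((c1+1 : ℕ) : ZMod (n-3)) ((c2+1 : ℕ) : ZMod (n-3)) := by
    intro c1 c2 hc1 hc2 hnec hadj
    rw [← hgeq]
    exact ⟨hcnec (c1+1) (c2+1) (by omega) (by omega) (by omega),
      b + (c1 : ZMod n), b + (c2 : ZMod n), hphi' c1 hc1, hphi' c2 hc2, hadj⟩
  have tr2 : ∀ c1 c2 : ℕ, c1 ≤ n-5 → c2 ≤ n-5 →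
      (mog (n-3) D').Adj ((c1+1 : ℕ) : ZMod (n-3)) ((c2+1 : ℕ) : ZMod (n-3)) →
      (mog n D).Adj (b + (c1 : ZMod n)) (b + (c2 : ZMod n)) := by
    intro c1 c2 hc1 hc2 hadj
    rw [← hgeq] at hadj
    obtain ⟨hne, u, v, hu, hv, huv⟩ := hadj
    rw [hfib u c1 hc1 hu, hfib v c2 hc2 hv] at huv
    exact huv
  have hnbrout : ∀ c : ℕ, 1 ≤ c → c ≤ n - 6 → ∀ x : ZMod n,
      (mog n D).Adj (b + (c : ZMod n)) x →
      ∃ cx : ℕ, cx ≤ n - 5 ∧ x = b + (cx : ZMod n) := by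
    intro c hc1 hc2 x hadj
    rw [mog_adj] at hadj
    obtain ⟨hedge, hnex⟩ := hadj
    rcases hedge with ⟨i, hi⟩ | hmem
    · rcases Sym2.eq_iff.mp hi with ⟨e1, e2⟩ | ⟨e1, e2⟩
      · refine ⟨c + 1, by omega, ?_⟩
        rw [e2, ← e1, shift_succ]
      · refine ⟨c - 1, by omega, ?_⟩
        have hs : b + (c : ZMod n) = (b + ((c-1 : ℕ) : ZMod n)) + 1 :=
          (succ_iff b (by omega) (by omega)).mpr (Or.inl (by omega))
        have h9 : i + 1 = (b + ((c-1 : ℕ) : ZMod n)) + 1 := by rw [← e1]; exact hs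
        rw [e2, add_right_cancel h9]
    · rcases hclass _ hmem with h | h | h | ⟨i, j, hij, hjn, h⟩
      · exfalso
        rcases Sym2.eq_iff.mp h with ⟨e1, -⟩ | ⟨e1, -⟩
        · rw [shift_eq_iff b (by omega) (by omega)] at e1; omega
        · rw [shift_eq_iff b (by omega) (by omega)] at e1; omega
      · exfalso
        rcases Sym2.eq_iff.mp h with ⟨e1, -⟩ | ⟨e1, -⟩
        · rw [shift_eq_iff b (by omega) (by omega)] at e1; omega
        · rw [shift_eq_iff b (by omega) (by omega)] at e1; omega
      · exfalso
        rcases Sym2.eq_iff.mp h with ⟨e1, -⟩ | ⟨e1, -⟩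
        · rw [shift_eq_iff b (by omega) (by omega)] at e1; omega
        · rw [shift_eq_iff b (by omega) (by omega)] at e1; omega
      · rcases Sym2.eq_iff.mp h with ⟨e1, e2⟩ | ⟨e1, e2⟩
        · exact ⟨j, hjn, e2⟩
        · exact ⟨i, by omega, e2⟩
  have hdegtr : ∀ c : ℕ, 1 ≤ c → c ≤ n - 6 →
      (Deg2 (mog n D) (b + (c : ZMod n)) ↔ Deg2 (mog (n-3) D') ((c+1 : ℕ) : ZMod (n-3))) := by
    intro c hc1 hc2
    have himgset : (mog (n-3) D').neighborSet ((c+1 : ℕ) : ZMod (n-3))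
        = φ '' ((mog n D).neighborSet (b + (c : ZMod n))) := by
      ext x'
      simp only [SimpleGraph.mem_neighborSet, Set.mem_image]
      constructor
      · intro hx'
        rw [← hgeq] at hx'
        obtain ⟨hne, u, v, hu, hv, huv⟩ := hx'
        rw [hfib u c (by omega) hu] at huv
        exact ⟨v, huv, hv⟩
      · rintro ⟨v, hvadj, rfl⟩
        obtain ⟨cx, hcx, rfl⟩ := hnbrout c hc1 hc2 v hvadj
        have hnecx : c ≠ cx := by
          intro hh
          subst hh
          exact (mog n D).loopless.irrefl _ hvadj
        rw [hphi' cx hcx]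
        exact tr1 c cx (by omega) hcx hnecx hvadj
    have hinj : Set.InjOn φ ((mog n D).neighborSet (b + (c : ZMod n))) := by
      intro x hx y hy hxy
      obtain ⟨cx, hcx, rfl⟩ := hnbrout c hc1 hc2 x hx
      obtain ⟨cy, hcy, rfl⟩ := hnbrout c hc1 hc2 y hy
      rw [hphi' cx hcx, hphi' cy hcy, natCast_eq_iff_of_le (by omega) (by omega)] at hxy
      rw [shift_eq_iff b (by omega) (by omega)]
      omega
    unfold Deg2
    rw [himgset, Set.ncard_image_of_injOn hinj]
  -- degree facts, G'-side
  have hsucc' : ∀ t : ℕ, ((t+1 : ℕ) : ZMod (n-3)) = ((t : ℕ) : ZMod (n-3)) + 1 := by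
    intro t; push_cast; ring
  have h3'' : s(b + ((0:ℕ) : ZMod n), b + ((n-5:ℕ) : ZMod n)) ∈ D := by
    rw [Sym2.eq_swap]; exact h3
  have h2'' : s(b + ((0:ℕ) : ZMod n), b + ((n-3:ℕ) : ZMod n)) ∈ D := by
    rw [Sym2.eq_swap]; exact h2
  have h1'' : s(b + ((n-3:ℕ) : ZMod n), b + ((n-5:ℕ) : ZMod n)) ∈ D := by
    rw [Sym2.eq_swap]; exact h1
  have hT3' : s(b + ((n-2:ℕ) : ZMod n), b + ((0:ℕ) : ZMod n)) ∈ D := by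
    rw [Sym2.eq_swap]; exact hT3
  have hmem45 : s(((1:ℕ) : ZMod (n-3)), ((n-4:ℕ) : ZMod (n-3))) ∈ D' := by
    rw [hD'def, Finset.mem_image]
    refine ⟨s(b + ((0:ℕ) : ZMod n), b + ((n-5:ℕ) : ZMod n)),
      hnotT 0 (n-5) (by omega) (by omega) h3'', ?_⟩
    rw [himg 0 (n-5) (by omega) (by omega), show (0+1 : ℕ) = 1 by omega,
      show n-5+1 = n-4 by omega]
  have hadj'12 : (mog (n-3) D').Adj ((1:ℕ) : ZMod (n-3)) ((2:ℕ) : ZMod (n-3)) := by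
    rw [mog_adj]
    exact ⟨Or.inl ⟨((1:ℕ) : ZMod (n-3)), by rw [show (2:ℕ) = 1+1 by omega, hsucc' 1]⟩,
      hcnec 1 2 (by omega) (by omega) (by omega)⟩
  have hadj'10 : (mog (n-3) D').Adj ((1:ℕ) : ZMod (n-3)) 0 := by
    have h9 := hadj0r5
    rw [hphir5] at h9
    exact h9.symm
  have hadj'14 : (mog (n-3) D').Adj ((1:ℕ) : ZMod (n-3)) ((n-4:ℕ) : ZMod (n-3)) := by
    rw [mog_adj]
    exact ⟨Or.inr hmem45, hcnec 1 (n-4) (by omega) (by omega) (by omega)⟩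
  have hnd'1 : ¬ Deg2 (mog (n-3) D') ((1:ℕ) : ZMod (n-3)) :=
    not_deg2_of_three _ _ _ _ _ hadj'12 hadj'10 hadj'14
      (fun h => hcne0 2 (by omega) (by omega) h.symm)
      (hcnec 2 (n-4) (by omega) (by omega) (by omega))
      (hcne0 (n-4) (by omega) (by omega))
  have hadj'45 : (mog (n-3) D').Adj ((n-4:ℕ) : ZMod (n-3)) ((n-5:ℕ) : ZMod (n-3)) := by
    rw [mog_adj]
    refine ⟨Or.inl ⟨((n-5:ℕ) : ZMod (n-3)), ?_⟩,
      hcnec (n-4) (n-5) (by omega) (by omega) (by omega)⟩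
    rw [show (n-4:ℕ) = (n-5)+1 by omega, hsucc' (n-5)]
    exact Sym2.eq_swap
  have hadj'40 : (mog (n-3) D').Adj ((n-4:ℕ) : ZMod (n-3)) 0 := by
    have h9 := hadj0r
    rw [hphir] at h9
    exact h9.symm
  have hnd'4 : ¬ Deg2 (mog (n-3) D') ((n-4:ℕ) : ZMod (n-3)) :=
    not_deg2_of_three _ _ _ _ _ hadj'45 hadj'40 hadj'14.symm
      (fun h => hcne0 (n-5) (by omega) (by omega) h.symm)
      (hcnec (n-5) 1 (by omega) (by omega) (by omega))
      (hcne0 1 (by omega) (by omega))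
  have hval_cases : ∀ x' : ZMod (n-3), Deg2 (mog (n-3) D') x' →
      x' = 0 ∨ (2 ≤ x'.val ∧ x'.val ≤ n - 5) := by
    intro x' hx'
    have ht := ZMod.val_lt x'
    by_cases h0 : x'.val = 0
    · left; exact (ZMod.val_eq_zero x').mp h0
    · by_cases hv1 : x'.val = 1
      · exfalso
        apply hnd'1
        rw [show ((1:ℕ) : ZMod (n-3)) = x' by rw [← hv1]; exact cast_val_eq x']
        exact hx'
      · by_cases hv4 : x'.val = n-4
        · exfalso
          apply hnd'4
          rw [show ((n-4:ℕ) : ZMod (n-3)) = x' by rw [← hv4]; exact cast_val_eq x']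
          exact hx'
        · right; omega
  have hZfwd : ∀ x' : ZMod (n-3), Deg2 (mog (n-3) D') x' → x' ≠ 0 →
      (2 ≤ x'.val ∧ x'.val ≤ n-5 ∧ Deg2 (mog n D) (b + ((x'.val - 1 : ℕ) : ZMod n))) := by
    intro x' hx' hne0
    rcases hval_cases x' hx' with h | ⟨ha, hb2⟩
    · exact absurd h hne0
    refine ⟨ha, hb2, ?_⟩
    apply (hdegtr (x'.val - 1) (by omega) (by omega)).mpr
    rw [show x'.val - 1 + 1 = x'.val by omega, cast_val_eq]
    exact hx'
  -- degree facts, G-side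
  have hadjG : ∀ i j : ℕ, i < n → j < n → i ≠ j →
      s(b + (i:ZMod n), b + (j:ZMod n)) ∈ D →
      (mog n D).Adj (b + (i:ZMod n)) (b + (j:ZMod n)) := by
    intro i j hi hj hij hm
    rw [mog_adj]; exact ⟨Or.inr hm, shift_ne b hi hj hij⟩
  have hnd0 : ¬ Deg2 (mog n D) (b + ((0:ℕ) : ZMod n)) :=
    not_deg2_of_three _ _ _ _ _ (hadjcons 0 1 (by omega) (by omega) (by omega))
      ((hadjcons (n-1) 0 (by omega) (by omega) (by omega)).symm)
      (hadjG 0 (n-3) (by omega) (by omega) (by omega) h2'')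
      (shift_ne b (by omega) (by omega) (by omega))
      (shift_ne b (by omega) (by omega) (by omega))
      (shift_ne b (by omega) (by omega) (by omega))
  have hnd5 : ¬ Deg2 (mog n D) (b + ((n-5:ℕ) : ZMod n)) :=
    not_deg2_of_three _ _ _ _ _
      ((hadjcons (n-6) (n-5) (by omega) (by omega) (by omega)).symm)
      (hadjcons (n-5) (n-4) (by omega) (by omega) (by omega))
      (hadjG (n-5) (n-3) (by omega) (by omega) (by omega) h1)
      (shift_ne b (by omega) (by omega) (by omega))
      (shift_ne b (by omega) (by omega) (by omega))
      (shift_ne b (by omega) (by omega) (by omega))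
  have hnd3 : ¬ Deg2 (mog n D) (b + ((n-3:ℕ) : ZMod n)) :=
    not_deg2_of_three _ _ _ _ _
      ((hadjcons (n-4) (n-3) (by omega) (by omega) (by omega)).symm)
      (hadjcons (n-3) (n-2) (by omega) (by omega) (by omega))
      (hadjG (n-3) (n-5) (by omega) (by omega) (by omega) h1'')
      (shift_ne b (by omega) (by omega) (by omega))
      (shift_ne b (by omega) (by omega) (by omega))
      (shift_ne b (by omega) (by omega) (by omega))
  have hnd2 : ¬ Deg2 (mog n D) (b + ((n-2:ℕ) : ZMod n)) :=
    not_deg2_of_three _ _ _ _ _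
      ((hadjcons (n-3) (n-2) (by omega) (by omega) (by omega)).symm)
      (hadjcons (n-2) (n-1) (by omega) (by omega) (by omega))
      (hadjG (n-2) 0 (by omega) (by omega) (by omega) hT3')
      (shift_ne b (by omega) (by omega) (by omega))
      (shift_ne b (by omega) (by omega) (by omega))
      (shift_ne b (by omega) (by omega) (by omega))
  have hGdeg : ∀ c : ℕ, c < n → Deg2 (mog n D) (b + (c : ZMod n)) →
      c = n-4 ∨ c = n-1 ∨ (1 ≤ c ∧ c ≤ n-6) := by
    intro c hc hdeg
    by_cases e0 : c = 0
    · exfalso; rw [e0] at hdeg; exact hnd0 hdeg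
    by_cases e5 : c = n-5
    · exfalso; rw [e5] at hdeg; exact hnd5 hdeg
    by_cases e3 : c = n-3
    · exfalso; rw [e3] at hdeg; exact hnd3 hdeg
    by_cases e2 : c = n-2
    · exfalso; rw [e2] at hdeg; exact hnd2 hdeg
    · omega
  -- the essential-pair injection
  have hval0 : ((0:ℕ) : ZMod (n-3)) = (0 : ZMod (n-3)) := by norm_num
  have hEssmap : ∀ x' y' : ZMod (n-3), Essential (n-3) (mog (n-3) D') x' y' →
      Essential n (mog n D)
        (if x' = 0 then b + ((n-1 : ℕ) : ZMod n) else b + ((x'.val - 1 : ℕ) : ZMod n))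
        (if y' = 0 then b + ((n-4 : ℕ) : ZMod n) else b + ((y'.val - 1 : ℕ) : ZMod n)) := by
    intro x' y' hp
    obtain ⟨hdx, hdy, hint, hlen⟩ := hp
    have hLval : (y' - x').val = if x'.val ≤ y'.val then y'.val - x'.val
        else (n-3) - (x'.val - y'.val) := by
      have h9 := val_sub_cast (N := n-3) (i := y'.val) (j := x'.val)
        (ZMod.val_lt _) (ZMod.val_lt _)
      rw [cast_val_eq, cast_val_eq] at h9
      exact h9
    by_cases hx0 : x' = 0
    · by_cases hy0 : y' = 0
      · exfalso
        rw [hx0, hy0] at hlen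
        simp at hlen
      · -- x' = 0, y' ≠ 0
        obtain ⟨ht2a, ht2b, hdeg2im⟩ := hZfwd y' hdy hy0
        have hlen2 : 3 ≤ y'.val := by
          rw [hx0] at hlen
          rw [sub_zero] at hlen
          exact hlen
        rw [if_pos hx0, if_neg hy0]
        refine ⟨hd4', hdeg2im, ?_, ?_⟩
        · intro x hIn
          have hxx := hbij x
          rw [hxx] at hIn ⊢
          unfold InArc at hIn
          rw [val_shift b (ZMod.val_lt _) (by omega : n-1 < n),
            val_shift b (by omega : y'.val - 1 < n) (by omega : n-1 < n)] at hIn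
          set cx := (x - b).val with hcx
          have hcxlt : cx < n := ZMod.val_lt _
          have hbound : 1 ≤ cx + 1 ∧ cx + 1 < y'.val := by
            split_ifs at hIn <;> omega
          intro hdd
          rcases hGdeg cx hcxlt hdd with hc | hc | hc
          · omega
          · omega
          · apply hint (((cx + 1 : ℕ)) : ZMod (n-3))
            · rw [hx0, ← hval0, ← cast_val_eq y']
              rw [inArc_cast (by omega) (ZMod.val_lt _) (by omega)]
              omega
            · exact (hdegtr cx hc.1 hc.2).mp hdd
        · rw [val_shift b (by omega) (by omega), if_neg (by omega)]
          omega
    · by_cases hy0 : y' = 0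
      · -- x' ≠ 0, y' = 0
        obtain ⟨ht1a, ht1b, hdeg1im⟩ := hZfwd x' hdx hx0
        have hlen2 : 3 ≤ (n-3) - x'.val := by
          rw [hy0] at hlen
          have h9 : ((0 : ZMod (n-3)) - x').val = (n-3) - x'.val := by
            have h8 := val_sub_cast (N := n-3) (i := 0) (j := x'.val)
              (by omega) (ZMod.val_lt _)
            rw [cast_val_eq, Nat.cast_zero] at h8
            rw [h8, if_neg (by omega)]
            omega
          omega
        rw [if_neg hx0, if_pos hy0]
        refine ⟨hdeg1im, hd1', ?_, ?_⟩
        · intro x hIn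
          have hxx := hbij x
          rw [hxx] at hIn ⊢
          unfold InArc at hIn
          rw [val_shift b (ZMod.val_lt _) (by omega : x'.val - 1 < n),
            val_shift b (by omega : n-4 < n) (by omega : x'.val - 1 < n)] at hIn
          set cx := (x - b).val with hcx
          have hcxlt : cx < n := ZMod.val_lt _
          have hbound : x'.val ≤ cx ∧ cx ≤ n - 5 := by
            split_ifs at hIn <;> omega
          intro hdd
          rcases hGdeg cx hcxlt hdd with hc | hc | hc
          · omega
          · omega
          · apply hint (((cx + 1 : ℕ)) : ZMod (n-3))
            · rw [hy0, ← hval0, ← cast_val_eq x']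
              rw [inArc_cast (ZMod.val_lt _) (by omega) (by omega)]
              omega
            · exact (hdegtr cx hc.1 hc.2).mp hdd
        · rw [val_shift b (by omega) (by omega), if_pos (by omega)]
          omega
      · -- both nonzero
        obtain ⟨ht1a, ht1b, hdeg1im⟩ := hZfwd x' hdx hx0
        obtain ⟨ht2a, ht2b, hdeg2im⟩ := hZfwd y' hdy hy0
        have h0notin : ¬ InArc (n-3) x' y' 0 := by
          intro hIn
          exact hint 0 hIn hdeg2'0
        have h0val : ((0 : ZMod (n-3)) - x').val = (n-3) - x'.val := by
          have h8 := val_sub_cast (N := n-3) (i := 0) (j := x'.val)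
            (by omega) (ZMod.val_lt _)
          rw [cast_val_eq, Nat.cast_zero] at h8
          rw [h8, if_neg (by omega)]
          omega
        have hts : x'.val < y'.val ∧ 3 ≤ y'.val - x'.val := by
          unfold InArc at h0notin
          rw [h0val, hLval] at h0notin
          rw [hLval] at hlen
          split_ifs at h0notin hlen <;> omega
        rw [if_neg hx0, if_neg hy0]
        refine ⟨hdeg1im, hdeg2im, ?_, ?_⟩
        · intro x hIn
          have hxx := hbij x
          rw [hxx] at hIn ⊢
          unfold InArc at hIn
          rw [val_shift b (ZMod.val_lt _) (by omega : x'.val - 1 < n),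
            val_shift b (by omega : y'.val - 1 < n) (by omega : x'.val - 1 < n)] at hIn
          set cx := (x - b).val with hcx
          have hcxlt : cx < n := ZMod.val_lt _
          have hbound : x'.val ≤ cx ∧ cx + 1 < y'.val := by
            split_ifs at hIn <;> omega
          intro hdd
          rcases hGdeg cx hcxlt hdd with hc | hc | hc
          · omega
          · omega
          · apply hint (((cx + 1 : ℕ)) : ZMod (n-3))
            · rw [← cast_val_eq x', ← cast_val_eq y']
              rw [inArc_cast (ZMod.val_lt _) (ZMod.val_lt _) (by omega)]
              omega
            · exact (hdegtr cx hc.1 hc.2).mp hdd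
        · rw [val_shift b (by omega) (by omega), if_pos (by omega)]
          omega
  -- the fixed essential pair (r+1, r+4)
  have hEpair : Essential n (mog n D) (b + ((n-4:ℕ) : ZMod n)) (b + ((n-1:ℕ) : ZMod n)) := by
    refine ⟨hd1', hd4', ?_, ?_⟩
    · intro x hIn
      have hxx := hbij x
      rw [hxx] at hIn ⊢
      unfold InArc at hIn
      rw [val_shift b (ZMod.val_lt _) (by omega : n-4 < n),
        val_shift b (by omega : n-1 < n) (by omega : n-4 < n)] at hIn
      set cx := (x - b).val with hcx
      have hcxlt : cx < n := ZMod.val_lt _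
      have hbound : cx = n-3 ∨ cx = n-2 := by
        split_ifs at hIn <;> omega
      rcases hbound with hc | hc
      · rw [hc]; exact hnd3
      · rw [hc]; exact hnd2
    · rw [val_shift b (by omega) (by omega), if_pos (by omega)]
      omega
  -- numEssential inequality
  have hvalsmall : ∀ c : ℕ, c < n - 3 → ((c : ℕ) : ZMod (n-3)).val = c := by
    intro c hc
    rw [ZMod.val_natCast, Nat.mod_eq_of_lt hc]
  have hnumess : numEssential (n-3) (mog (n-3) D') + 1 ≤ numEssential n (mog n D) := by
    unfold numEssential
    set E' : Set (ZMod (n-3) × ZMod (n-3)) :=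
      {p | Essential (n-3) (mog (n-3) D') p.1 p.2} with hE'
    set E : Set (ZMod n × ZMod n) := {p | Essential n (mog n D) p.1 p.2} with hE
    set Fm : ZMod (n-3) × ZMod (n-3) → ZMod n × ZMod n := fun p =>
      (if p.1 = 0 then b + ((n-1 : ℕ) : ZMod n) else b + ((p.1.val - 1 : ℕ) : ZMod n),
       if p.2 = 0 then b + ((n-4 : ℕ) : ZMod n) else b + ((p.2.val - 1 : ℕ) : ZMod n)) with hFm
    have hsub : insert (b + ((n-4:ℕ) : ZMod n), b + ((n-1:ℕ) : ZMod n)) (Fm '' E') ⊆ E := by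
      intro z hz
      rcases Set.mem_insert_iff.mp hz with rfl | ⟨p, hp, rfl⟩
      · exact hEpair
      · exact hEssmap p.1 p.2 hp
    have hcomp : ∀ (x' y' : ZMod (n-3)) (w : ℕ), Deg2 (mog (n-3) D') x' →
        Deg2 (mog (n-3) D') y' → n-4 ≤ w → w < n →
        ((if x' = 0 then b + ((w : ℕ) : ZMod n) else b + ((x'.val - 1 : ℕ) : ZMod n)) =
         (if y' = 0 then b + ((w : ℕ) : ZMod n) else b + ((y'.val - 1 : ℕ) : ZMod n))) →
        x' = y' := by
      intro x' y' w hdx hdy hw1 hw2 heq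
      by_cases hx0 : x' = 0 <;> by_cases hy0 : y' = 0
      · rw [hx0, hy0]
      · exfalso
        rcases hval_cases y' hdy with h | h
        · exact hy0 h
        rw [if_pos hx0, if_neg hy0, shift_eq_iff b hw2 (by omega)] at heq
        omega
      · exfalso
        rcases hval_cases x' hdx with h | h
        · exact hx0 h
        rw [if_neg hx0, if_pos hy0, shift_eq_iff b (by omega) hw2] at heq
        omega
      · rcases hval_cases x' hdx with h | hxv
        · exact absurd h hx0
        rcases hval_cases y' hdy with h | hyv
        · exact absurd h hy0
        rw [if_neg hx0, if_neg hy0, shift_eq_iff b (by omega) (by omega)] at heq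
        have hvv : x'.val = y'.val := by omega
        rw [← cast_val_eq x', ← cast_val_eq y', hvv]
    have hinj : Set.InjOn Fm E' := by
      intro p hp q hq heq
      have hp' : Essential (n-3) (mog (n-3) D') p.1 p.2 := hp
      have hq' : Essential (n-3) (mog (n-3) D') q.1 q.2 := hq
      have h1c : (Fm p).1 = (Fm q).1 := congrArg Prod.fst heq
      have h2c : (Fm p).2 = (Fm q).2 := congrArg Prod.snd heq
      simp only [hFm] at h1c h2c
      exact Prod.ext (hcomp p.1 q.1 (n-1) hp'.1 hq'.1 (by omega) (by omega) h1c)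
        (hcomp p.2 q.2 (n-4) hp'.2.1 hq'.2.1 (by omega) (by omega) h2c)
    have hnotmem : (b + ((n-4:ℕ) : ZMod n), b + ((n-1:ℕ) : ZMod n)) ∉ Fm '' E' := by
      rintro ⟨p, hp, heq⟩
      have hp' : Essential (n-3) (mog (n-3) D') p.1 p.2 := hp
      have h1c : (Fm p).1 = b + ((n-4:ℕ) : ZMod n) := congrArg Prod.fst heq
      simp only [hFm] at h1c
      by_cases hx0 : p.1 = 0
      · rw [if_pos hx0, shift_eq_iff b (by omega) (by omega)] at h1c
        omega
      · rw [if_neg hx0] at h1c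
        rcases hval_cases p.1 hp'.1 with h | h
        · exact hx0 h
        · rw [shift_eq_iff b (by omega) (by omega)] at h1c
          omega
    have hE'fin : E'.Finite := Set.toFinite _
    have hEfin : E.Finite := Set.toFinite _
    have hc1 : (Fm '' E').ncard = E'.ncard := Set.ncard_image_of_injOn hinj
    have hc2 : (insert (b + ((n-4:ℕ) : ZMod n), b + ((n-1:ℕ) : ZMod n)) (Fm '' E')).ncard
        = (Fm '' E').ncard + 1 := Set.ncard_insert_of_notMem hnotmem (hE'fin.image _)
    have hc3 := Set.ncard_le_ncard hsub hEfin
    omega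
  -- domination
  have hstep : ∀ (u' : ZMod (n-3)) (cv : ℕ), cv ≤ n-5 → u' ≠ 0 →
      (mog (n-3) D').Adj u' (((cv+1 : ℕ)) : ZMod (n-3)) →
      (mog n D).Adj (b + ((u'.val - 1 : ℕ) : ZMod n)) (b + (cv : ZMod n)) := by
    intro u' cv hcv hne0 hadj
    have hv0 : u'.val ≠ 0 := fun h => hne0 ((ZMod.val_eq_zero u').mp h)
    have hvlt : u'.val < n - 3 := ZMod.val_lt _
    have hu'c : u' = ((u'.val - 1 + 1 : ℕ) : ZMod (n-3)) := by
      rw [show u'.val - 1 + 1 = u'.val by omega, cast_val_eq]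
    rw [hu'c] at hadj
    exact tr2 (u'.val - 1) cv (by omega) hcv hadj
  have hdomfin : domNum (mog n D) ≤ domNum (mog (n-3) D') + 1 := by
    have hnonempty : {k | ∃ S : Set (ZMod (n-3)),
        IsDominating (mog (n-3) D') S ∧ S.ncard = k}.Nonempty :=
      ⟨(Set.univ : Set (ZMod (n-3))).ncard, Set.univ, fun v => Or.inl trivial, rfl⟩
    obtain ⟨S', hS'dom, hS'card⟩ := Nat.sInf_mem hnonempty
    -- generic: a dominating set of G built from S' plus extra vertex xe, when xe with helpers
    by_cases h0S : (0 : ZMod (n-3)) ∈ S'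
    · -- case A
      set S : Set (ZMod n) :=
        ((fun k : ZMod (n-3) => b + ((k.val - 1 : ℕ) : ZMod n)) '' (S' \ {0}))
          ∪ {b + ((n-3:ℕ) : ZMod n), b + ((0:ℕ) : ZMod n)} with hS
      have hSdom : IsDominating (mog n D) S := by
        intro v
        have hvv := hbij v
        set cv := (v - b).val with hcvdef
        have hcvlt : cv < n := ZMod.val_lt _
        by_cases hblock : n - 4 ≤ cv
        · -- block and r+2, r+5 are covered by the two extra vertices
          by_cases hc3 : cv = n-3
          · left
            rw [hS, hvv, hc3]
            right; left; rfl
          · right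
            by_cases hc4 : cv = n-4
            · refine ⟨b + ((n-3:ℕ) : ZMod n), by rw [hS]; right; left; rfl, ?_⟩
              rw [hvv, hc4]
              exact (hadjcons (n-4) (n-3) (by omega) (by omega) (by omega)).symm
            by_cases hc2 : cv = n-2
            · refine ⟨b + ((0:ℕ) : ZMod n), by rw [hS]; right; right; rfl, ?_⟩
              rw [hvv, hc2]
              exact hadjG (n-2) 0 (by omega) (by omega) (by omega) hT3' |>.symm
            · have hc1 : cv = n-1 := by omega
              refine ⟨b + ((0:ℕ) : ZMod n), by rw [hS]; right; right; rfl, ?_⟩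
              rw [hvv, hc1]
              exact (hadjcons (n-1) 0 (by omega) (by omega) (by omega)).symm
        · -- outer
          push_neg at hblock
          have hcv5 : cv ≤ n - 5 := by omega
          rcases hS'dom (((cv+1 : ℕ)) : ZMod (n-3)) with hk | ⟨u', hu'S, hadj'⟩
          · left
            rw [hS, hvv]
            left
            refine ⟨((cv+1 : ℕ) : ZMod (n-3)), ⟨hk, ?_⟩, ?_⟩
            · intro hc
              exact hcne0 (cv+1) (by omega) (by omega) (Set.mem_singleton_iff.mp hc).symm
            · show b + ((((cv+1 : ℕ) : ZMod (n-3)).val - 1 : ℕ) : ZMod n)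
                = b + ((cv : ℕ) : ZMod n)
              rw [hvalsmall (cv+1) (by omega)]
              norm_num
          · by_cases hu'0 : u' = 0
            · -- neighbours of 0 in G' are 1 and n-4, i.e. v ∈ {r+5, r}
              have hmem0 : (((cv+1 : ℕ)) : ZMod (n-3)) ∈ (mog (n-3) D').neighborSet 0 := by
                rw [hu'0] at hadj'
                exact hadj'
              rw [hnb0] at hmem0
              rcases hmem0 with hm | hm
              · -- cv+1 = 1, v = b+0 ∈ S
                have : cv = 0 := by
                  rw [natCast_eq_iff_of_le (by omega) (by omega)] at hm
                  omega
                left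
                rw [hS, hvv, this]
                right; right; rfl
              · -- cv + 1 = n-4, v = r: adjacent to b+0
                have : cv = n - 5 := by
                  rw [Set.mem_singleton_iff, natCast_eq_iff_of_le (by omega) (by omega)] at hm
                  omega
                right
                refine ⟨b + ((0:ℕ) : ZMod n), by rw [hS]; right; right; rfl, ?_⟩
                rw [hvv, this]
                exact hadjG 0 (n-5) (by omega) (by omega) (by omega) h3''
            · right
              refine ⟨b + ((u'.val - 1 : ℕ) : ZMod n), ?_, ?_⟩
              · rw [hS]
                left
                exact ⟨u', ⟨hu'S, fun hc => hu'0 (Set.mem_singleton_iff.mp hc)⟩, rfl⟩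
              · rw [hvv]
                exact hstep u' cv hcv5 hu'0 hadj'
      have hScard : S.ncard ≤ domNum (mog (n-3) D') + 1 := by
        have hfin1 : (S' \ {0}).Finite := Set.toFinite _
        have hd1c : ((fun k : ZMod (n-3) => b + ((k.val - 1 : ℕ) : ZMod n)) '' (S' \ {0})).ncard
            ≤ (S' \ {0}).ncard := Set.ncard_image_le hfin1
        have hd2c : (S' \ {0}).ncard = S'.ncard - 1 :=
          Set.ncard_diff_singleton_of_mem h0S
        have hpos : 1 ≤ S'.ncard := by
          have : ({0} : Set (ZMod (n-3))).ncard ≤ S'.ncard :=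
            Set.ncard_le_ncard (by simpa using h0S) (Set.toFinite _)
          simpa using this
        have hd3c : ({b + ((n-3:ℕ) : ZMod n), b + ((0:ℕ) : ZMod n)} : Set (ZMod n)).ncard ≤ 2 := by
          apply le_trans (Set.ncard_insert_le _ _)
          simp
        have := Set.ncard_union_le
          ((fun k : ZMod (n-3) => b + ((k.val - 1 : ℕ) : ZMod n)) '' (S' \ {0}))
          {b + ((n-3:ℕ) : ZMod n), b + ((0:ℕ) : ZMod n)}
        rw [hS]
        unfold domNum
        omega
      have hmemk : S.ncard ∈ {k | ∃ S2 : Set (ZMod n),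
          IsDominating (mog n D) S2 ∧ S2.ncard = k} := ⟨S, hSdom, rfl⟩
      have hle := Nat.sInf_le hmemk
      unfold domNum at hScard ⊢
      omega
    · -- case B : 0 ∉ S'
      obtain ⟨u0, hu0S, hadj0⟩ : ∃ u0 ∈ S', (mog (n-3) D').Adj u0 0 := by
        rcases hS'dom 0 with h | h
        · exact absurd h h0S
        · exact h
      have hu0mem : u0 ∈ (mog (n-3) D').neighborSet 0 := hadj0.symm
      rw [hnb0] at hu0mem
      have hu0val : u0 = ((1:ℕ) : ZMod (n-3)) ∨ u0 = ((n-4:ℕ) : ZMod (n-3)) := by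
        rcases hu0mem with hm | hm
        · left; exact hm
        · right; exact Set.mem_singleton_iff.mp hm
      set xe : ZMod n := if u0 = ((1:ℕ) : ZMod (n-3)) then b + ((n-3:ℕ) : ZMod n)
        else b + ((0:ℕ) : ZMod n) with hxe
      set S : Set (ZMod n) :=
        ((fun k : ZMod (n-3) => b + ((k.val - 1 : ℕ) : ZMod n)) '' S') ∪ {xe} with hS
      have hb0S : b + ((0:ℕ) : ZMod n) ∈ S := by
        rcases hu0val with hm | hm
        · rw [hS]
          left
          refine ⟨u0, hu0S, ?_⟩
          show b + ((u0.val - 1 : ℕ) : ZMod n) = b + ((0 : ℕ) : ZMod n)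
          rw [hm, hvalsmall 1 (by omega)]
        · rw [hS]
          right
          rw [Set.mem_singleton_iff, hxe,
            if_neg (by rw [hm]; exact hcnec (n-4) 1 (by omega) (by omega) (by omega))]
      have hr1cov : ∃ u ∈ S, (mog n D).Adj u (b + ((n-4:ℕ) : ZMod n)) := by
        rcases hu0val with hm | hm
        · refine ⟨b + ((n-3:ℕ) : ZMod n), ?_,
            (hadjcons (n-4) (n-3) (by omega) (by omega) (by omega)).symm⟩
          rw [hS]
          right
          rw [Set.mem_singleton_iff, hxe, if_pos hm]
        · refine ⟨b + ((n-5:ℕ) : ZMod n), ?_,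
            hadjcons (n-5) (n-4) (by omega) (by omega) (by omega)⟩
          rw [hS]
          left
          refine ⟨u0, hu0S, ?_⟩
          show b + ((u0.val - 1 : ℕ) : ZMod n) = b + ((n-5 : ℕ) : ZMod n)
          rw [hm, hvalsmall (n-4) (by omega), show n-4-1 = n-5 by omega]
      have hSdom : IsDominating (mog n D) S := by
        intro v
        have hvv := hbij v
        set cv := (v - b).val with hcvdef
        have hcvlt : cv < n := ZMod.val_lt _
        by_cases hblock : n - 4 ≤ cv
        · right
          by_cases hc4 : cv = n-4
          · obtain ⟨u, huS, hadju⟩ := hr1cov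
            exact ⟨u, huS, by rw [hvv, hc4]; exact hadju⟩
          by_cases hc3 : cv = n-3
          · refine ⟨b + ((0:ℕ) : ZMod n), hb0S, ?_⟩
            rw [hvv, hc3]
            exact hadjG 0 (n-3) (by omega) (by omega) (by omega) h2''
          by_cases hc2 : cv = n-2
          · refine ⟨b + ((0:ℕ) : ZMod n), hb0S, ?_⟩
            rw [hvv, hc2]
            exact (hadjG (n-2) 0 (by omega) (by omega) (by omega) hT3').symm
          · have hc1 : cv = n-1 := by omega
            refine ⟨b + ((0:ℕ) : ZMod n), hb0S, ?_⟩
            rw [hvv, hc1]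
            exact (hadjcons (n-1) 0 (by omega) (by omega) (by omega)).symm
        · push_neg at hblock
          have hcv5 : cv ≤ n - 5 := by omega
          rcases hS'dom (((cv+1 : ℕ)) : ZMod (n-3)) with hk | ⟨u', hu'S, hadj'⟩
          · left
            rw [hS, hvv]
            left
            refine ⟨((cv+1 : ℕ) : ZMod (n-3)), hk, ?_⟩
            show b + ((((cv+1 : ℕ) : ZMod (n-3)).val - 1 : ℕ) : ZMod n)
              = b + ((cv : ℕ) : ZMod n)
            rw [hvalsmall (cv+1) (by omega)]
            norm_num
          · have hu'0 : u' ≠ 0 := fun hc => h0S (hc ▸ hu'S)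
            right
            refine ⟨b + ((u'.val - 1 : ℕ) : ZMod n), ?_, ?_⟩
            · rw [hS]
              left
              exact ⟨u', hu'S, rfl⟩
            · rw [hvv]
              exact hstep u' cv hcv5 hu'0 hadj'
      have hScard : S.ncard ≤ domNum (mog (n-3) D') + 1 := by
        have hd1c : ((fun k : ZMod (n-3) => b + ((k.val - 1 : ℕ) : ZMod n)) '' S').ncard
            ≤ S'.ncard := Set.ncard_image_le (Set.toFinite _)
        have hd3c : ({xe} : Set (ZMod n)).ncard = 1 := Set.ncard_singleton _
        have := Set.ncard_union_le
          ((fun k : ZMod (n-3) => b + ((k.val - 1 : ℕ) : ZMod n)) '' S') {xe}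
        rw [hS]
        unfold domNum
        omega
      have hmemk : S.ncard ∈ {k | ∃ S2 : Set (ZMod n),
          IsDominating (mog n D) S2 ∧ S2.ncard = k} := ⟨S, hSdom, rfl⟩
      have hle := Nat.sInf_le hmemk
      unfold domNum at hScard ⊢
      omega
  refine ⟨D', hT', hgeq, hdeg2'0, hadj0r, hadj0r5, hnumess, hdomfin⟩
end

section
/- Let n ≥ 5 and let K be the simple graph on vertex set ℤ/nℤ whose edges are the cycle edges {i, i+1} for all i ∈ ℤ/nℤ together with a set S of 2-chords, where a 2-chord is a pair {i−1, i+1} (said to span the vertex i). Assume that there is no i ∈ ℤ/nℤ for which all three 2-chords {i−1, i+1}, {i, i+2}, {i+1, i+3} belong to S (i.e., no three consecutive vertices of the cycle are all spanned by 2-chords of S). If 2·|S| ≥ n + 1, then the domination number of K satisfies γ(K) ≤ ⌈2n/7⌉. -/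
set_option maxRecDepth 100000
set_option synthInstance.maxHeartbeats 1000000
set_option synthInstance.maxSize 2000


open SimpleGraph

def wB (c : Bool) : ℕ := if c then 1 else 3
def Pb (a b c d : Bool) : ℕ := if a && !b && c && !d then 0 else 1

lemma keybool : ∀ c0 c1 c2 c3 c4 c5 c6 c7 c8 c9 : Bool,
    (c0 && c1 && c2) = false → (c1 && c2 && c3) = false →
    (c2 && c3 && c4) = false → (c3 && c4 && c5) = false →
    (c4 && c5 && c6) = false → (c5 && c6 && c7) = false →
    (c6 && c7 && c8) = false → (c7 && c8 && c9) = false →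
    ((c1 && c3) = true →
      7 + Pb c0 c1 c3 c4 ≤ wB c0 + wB c1 + wB c2 + wB c3 + wB c4 + Pb c5 c6 c8 c9) ∧
    ((c1 && c3) = false → (c1 || c2) = true →
      7 + Pb c0 c1 c3 c4 ≤ wB c0 + wB c1 + wB c2 + wB c3 + Pb c4 c5 c7 c8) ∧
    ((c1 && c3) = false → (c1 || c2) = false →
      7 + Pb c0 c1 c3 c4 ≤ wB c0 + wB c1 + wB c2 + Pb c3 c4 c6 c7) := by decide

def advB (b : ℕ → Bool) (p : ℕ) : ℕ :=
  if b (p+1) && b (p+3) then 5 else if b (p+1) || b (p+2) then 4 else 3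

def phiB (b : ℕ → Bool) (p : ℕ) : ℕ := Pb (b p) (b (p+1)) (b (p+3)) (b (p+4))

def WB (b : ℕ → Bool) : ℕ → ℕ
  | 0 => 0
  | p+1 => WB b p + wB (b p)

def frB (b : ℕ → Bool) : ℕ → ℕ
  | 0 => 0
  | k+1 => frB b k + advB b (frB b k)

def centB (b : ℕ → Bool) (p : ℕ) : ℕ :=
  if b (p+1) && b (p+3) then p+2 else if b (p+2) then p+1 else if b (p+1) then p+2 else p+1

lemma keystep (b : ℕ → Bool) (hb : ∀ j, (b j && b (j+1) && b (j+2)) = false) (p : ℕ) :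
    7 + phiB b p + WB b p ≤ WB b (p + advB b p) + phiB b (p + advB b p) := by
  obtain ⟨k5, k4, k3⟩ := keybool (b p) (b (p+1)) (b (p+2)) (b (p+3)) (b (p+4)) (b (p+5))
    (b (p+6)) (b (p+7)) (b (p+8)) (b (p+9)) (hb p) (hb (p+1)) (hb (p+2)) (hb (p+3)) (hb (p+4))
    (hb (p+5)) (hb (p+6)) (hb (p+7))
  rw [advB]
  by_cases h13 : (b (p+1) && b (p+3)) = true
  · rw [if_pos h13]
    have e : WB b (p+5) = WB b p + (wB (b p) + wB (b (p+1)) + wB (b (p+2)) + wB (b (p+3)) + wB (b (p+4))) := by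
      show WB b (p+4+1) = _
      rw [WB, show p+4 = p+3+1 from rfl, WB, show p+3 = p+2+1 from rfl, WB,
        show p+2 = p+1+1 from rfl, WB, show p+1 = p+0+1 from rfl, WB]
      simp [Nat.add_assoc]
    have e2 : phiB b (p+5) = Pb (b (p+5)) (b (p+6)) (b (p+8)) (b (p+9)) := rfl
    have e3 : phiB b p = Pb (b p) (b (p+1)) (b (p+3)) (b (p+4)) := rfl
    rw [e, e2, e3]
    have := k5 h13
    omega
  · rw [if_neg h13]
    have h13' : (b (p+1) && b (p+3)) = false := by revert h13; cases (b (p+1) && b (p+3)) <;> simp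
    by_cases h12 : (b (p+1) || b (p+2)) = true
    · rw [if_pos h12]
      have e : WB b (p+4) = WB b p + (wB (b p) + wB (b (p+1)) + wB (b (p+2)) + wB (b (p+3))) := by
        show WB b (p+3+1) = _
        rw [WB, show p+3 = p+2+1 from rfl, WB, show p+2 = p+1+1 from rfl, WB,
          show p+1 = p+0+1 from rfl, WB]
        simp [Nat.add_assoc]
      have e2 : phiB b (p+4) = Pb (b (p+4)) (b (p+5)) (b (p+7)) (b (p+8)) := rfl
      have e3 : phiB b p = Pb (b p) (b (p+1)) (b (p+3)) (b (p+4)) := rfl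
      rw [e, e2, e3]
      have := k4 h13' h12
      omega
    · rw [if_neg h12]
      have h12' : (b (p+1) || b (p+2)) = false := by revert h12; cases (b (p+1) || b (p+2)) <;> simp
      have e : WB b (p+3) = WB b p + (wB (b p) + wB (b (p+1)) + wB (b (p+2))) := by
        show WB b (p+2+1) = _
        rw [WB, show p+2 = p+1+1 from rfl, WB, show p+1 = p+0+1 from rfl, WB]
        simp [Nat.add_assoc]
      have e2 : phiB b (p+3) = Pb (b (p+3)) (b (p+4)) (b (p+6)) (b (p+7)) := rfl
      have e3 : phiB b p = Pb (b p) (b (p+1)) (b (p+3)) (b (p+4)) := rfl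
      rw [e, e2, e3]
      have := k3 h13' h12'
      omega

lemma wB_ge (c : Bool) : 1 ≤ wB c := by cases c <;> simp [wB]

lemma phiB_le (b : ℕ → Bool) (p : ℕ) : phiB b p ≤ 1 := by
  unfold phiB Pb; split <;> omega

lemma advB_ge (b : ℕ → Bool) (p : ℕ) : 3 ≤ advB b p := by
  unfold advB; split
  · omega
  · split <;> omega

lemma WB_mono (b : ℕ → Bool) : Monotone (WB b) := by
  apply monotone_nat_of_le_succ
  intro p
  have : WB b (p+1) = WB b p + wB (b p) := rfl
  omega

lemma WB_cnt (b : ℕ → Bool) (m : ℕ) :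
    WB b m + 2 * ((Finset.range m).filter (fun j => b j = true)).card = 3 * m := by
  induction m with
  | zero => simp [WB]
  | succ p ih =>
    rw [Finset.range_add_one, Finset.filter_insert]
    have hW : WB b (p+1) = WB b p + wB (b p) := rfl
    by_cases hbp : b p = true
    · rw [if_pos hbp, Finset.card_insert_of_notMem (by simp)]
      have : wB (b p) = 1 := by rw [hbp]; rfl
      omega
    · rw [if_neg hbp]
      have : wB (b p) = 3 := by
        have : b p = false := by revert hbp; cases b p <;> simp
        rw [this]; rfl
      omega

lemma frB_ge (b : ℕ → Bool) (k : ℕ) : 3 * k ≤ frB b k := by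
  induction k with
  | zero => simp [frB]
  | succ m ih =>
    have h1 : frB b (m+1) = frB b m + advB b (frB b m) := rfl
    have := advB_ge b (frB b m)
    omega

lemma frB_exists (b : ℕ → Bool) :
    ∀ m j, j < frB b m → ∃ k, k < m ∧ frB b k ≤ j ∧ j < frB b k + advB b (frB b k) := by
  intro m
  induction m with
  | zero => intro j hj; simp [frB] at hj
  | succ m ih =>
    intro j hj
    by_cases h : j < frB b m
    · obtain ⟨k, h1, h2, h3⟩ := ih j h
      exact ⟨k, by omega, h2, h3⟩
    · exact ⟨m, Nat.lt_succ_self m, not_lt.mp h, hj⟩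

/-- Theorem 3.2 of [PYZ]. Let `K` be the graph on `ℤ/nℤ`, `n ≥ 5`,
consisting of the cycle `0 1 ⋯ (n-1) 0` together with a set `S` of 2-chords (pairs
`{i-1, i+1}`), such that no three consecutive vertices of the cycle are all spanned by
2-chords of `S`. If `2|S| ≥ n + 1`, then `γ(K) ≤ ⌈2n/7⌉`. -/
theorem statement11 (n : ℕ) (hn : 5 ≤ n) (S : Finset (Sym2 (ZMod n)))
    (hS : ∀ e ∈ S, ∃ i : ZMod n, e = s(i - 1, i + 1))
    (h3 : ¬ ∃ i : ZMod n,
      s(i - 1, i + 1) ∈ S ∧ s(i, i + 2) ∈ S ∧ s(i + 1, i + 3) ∈ S)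
    (hcard : n + 1 ≤ 2 * S.card) :
    domNum (SimpleGraph.fromEdgeSet
        ({e | ∃ i : ZMod n, e = s(i, i + 1)} ∪ (S : Set (Sym2 (ZMod n))))) ≤
      ⌈(2 * (n : ℚ)) / 7⌉₊ := by
  haveI : NeZero n := ⟨by omega⟩
  haveI : Fact (1 < n) := ⟨by omega⟩
  set G := SimpleGraph.fromEdgeSet
      ({e | ∃ i : ZMod n, e = s(i, i + 1)} ∪ (S : Set (Sym2 (ZMod n)))) with hG
  set T : Finset (ZMod n) := Finset.univ.filter (fun i => s(i - 1, i + 1) ∈ S) with hT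
  set b : ℕ → Bool := fun j => decide ((j : ZMod n) ∈ T) with hbdef
  have hbT : ∀ j : ℕ, b j = true ↔ s(((j : ZMod n)) - 1, ((j : ZMod n)) + 1) ∈ S := by
    intro j; simp [hbdef, hT]
  have hb' : ∀ j, (b j && b (j+1) && b (j+2)) = false := by
    intro j
    by_contra hcon
    have h1 : b j = true ∧ b (j+1) = true ∧ b (j+2) = true := by
      revert hcon; cases hj0 : b j <;> cases hj1 : b (j+1) <;> cases hj2 : b (j+2) <;> simp
    apply h3
    refine ⟨(j : ZMod n), (hbT j).mp h1.1, ?_, ?_⟩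
    · have h := (hbT (j+1)).mp h1.2.1
      rw [show ((j+1 : ℕ) : ZMod n) = (j : ZMod n) + 1 by push_cast; ring] at h
      rw [show (j : ZMod n) + 1 - 1 = (j : ZMod n) from by ring,
          show (j : ZMod n) + 1 + 1 = (j : ZMod n) + 2 from by ring] at h
      exact h
    · have h := (hbT (j+2)).mp h1.2.2
      rw [show ((j+2 : ℕ) : ZMod n) = (j : ZMod n) + 2 by push_cast; ring] at h
      rw [show (j : ZMod n) + 2 - 1 = (j : ZMod n) + 1 from by ring,
          show (j : ZMod n) + 2 + 1 = (j : ZMod n) + 3 from by ring] at h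
      exact h
  -- counting
  have hSsub : S ⊆ T.image (fun i => s(i - 1, i + 1)) := by
    intro e he
    obtain ⟨i, rfl⟩ := hS e he
    exact Finset.mem_image.mpr ⟨i, by simp [hT, he], rfl⟩
  have hSt : S.card ≤ T.card :=
    le_trans (Finset.card_le_card hSsub) Finset.card_image_le
  have hTcnt : T.card ≤ ((Finset.range n).filter (fun j => b j = true)).card := by
    apply Finset.card_le_card_of_injOn (fun i : ZMod n => i.val)
    · intro i hi
      simp only [Finset.mem_coe, Finset.mem_filter, Finset.mem_range]
      refine ⟨ZMod.val_lt i, ?_⟩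
      show b i.val = true
      rw [hbT, ZMod.natCast_rightInverse i]
      simp only [hT, Finset.mem_coe, Finset.mem_filter, Finset.mem_univ, true_and] at hi
      exact hi
    · intro a _ c _ h
      exact ZMod.val_injective n h
  have hWn := WB_cnt b n
  -- frontier sequence
  have hex : ∃ k, n ≤ frB b k := ⟨n, by have := frB_ge b n; omega⟩
  set K := Nat.find hex with hKdef
  have hK : n ≤ frB b K := Nat.find_spec hex
  have hK0 : K ≠ 0 := by
    intro h
    rw [h] at hK
    have : frB b 0 = 0 := rfl
    omega
  have hKprev : frB b (K-1) < n := by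
    have := Nat.find_min hex (show K - 1 < K by omega)
    omega
  have hInv : ∀ k, 7 * k + phiB b 0 ≤ WB b (frB b k) + phiB b (frB b k) := by
    intro k
    induction k with
    | zero =>
      have h0 : frB b 0 = 0 := rfl
      have h1 : WB b 0 = 0 := rfl
      rw [h0]
      omega
    | succ m ih =>
      have hs := keystep b hb' (frB b m)
      have he : frB b (m+1) = frB b m + advB b (frB b m) := rfl
      rw [he]
      omega
  have h7K : 7 * K ≤ 2 * n + 6 := by
    have h1 := hInv (K-1)
    have h5 := phiB_le b (frB b (K-1))
    have h2 : WB b (frB b (K-1)) ≤ WB b (n-1) := WB_mono b (by omega)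
    have h3' : WB b ((n-1)+1) = WB b (n-1) + wB (b (n-1)) := rfl
    rw [show (n-1)+1 = n by omega] at h3'
    have h4 := wB_ge (b (n-1))
    omega
  -- adjacency helpers
  have hone : (1 : ZMod n) ≠ 0 := one_ne_zero
  have h2ne : (2 : ZMod n) ≠ 0 := by
    intro h
    have h2 : ((2:ℕ) : ZMod n) = 0 := by exact_mod_cast h
    rw [ZMod.natCast_eq_zero_iff] at h2
    have := Nat.le_of_dvd (by norm_num) h2
    omega
  have hC : ∀ q : ℕ, G.Adj ((q : ℕ) : ZMod n) (((q+1 : ℕ)) : ZMod n) := by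
    intro q
    rw [show ((q+1 : ℕ) : ZMod n) = (q : ZMod n) + 1 by push_cast; ring]
    rw [hG, SimpleGraph.fromEdgeSet_adj]
    exact ⟨Or.inl ⟨(q : ZMod n), rfl⟩, fun h => hone (left_eq_add.mp h)⟩
  have hC2 : ∀ q : ℕ, b (q+1) = true → G.Adj ((q : ℕ) : ZMod n) (((q+2 : ℕ)) : ZMod n) := by
    intro q hq
    have hmem := (hbT (q+1)).mp hq
    rw [show ((q+1 : ℕ) : ZMod n) = (q : ZMod n) + 1 by push_cast; ring] at hmem
    rw [show (q : ZMod n) + 1 - 1 = (q : ZMod n) from by ring,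
        show (q : ZMod n) + 1 + 1 = (q : ZMod n) + 2 from by ring] at hmem
    rw [show ((q+2 : ℕ) : ZMod n) = (q : ZMod n) + 2 by push_cast; ring]
    rw [hG, SimpleGraph.fromEdgeSet_adj]
    exact ⟨Or.inr (Finset.mem_coe.mpr hmem), fun h => h2ne (left_eq_add.mp h)⟩
  -- coverage
  have hcover : ∀ p j : ℕ, p ≤ j → j < p + advB b p →
      ((centB b p : ℕ) : ZMod n) = (j : ZMod n) ∨
        G.Adj ((centB b p : ℕ) : ZMod n) ((j : ℕ) : ZMod n) := by
    intro p j h1 h2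
    rw [advB] at h2
    rw [centB]
    by_cases h13 : (b (p+1) && b (p+3)) = true
    · rw [if_pos h13] at h2 ⊢
      have hb1 : b (p+1) = true := by revert h13; cases b (p+1) <;> simp
      have hb3 : b (p+3) = true := by revert h13; cases b (p+1) <;> cases b (p+3) <;> simp
      have hj : j = p ∨ j = p+1 ∨ j = p+2 ∨ j = p+3 ∨ j = p+4 := by omega
      rcases hj with h|h|h|h|h <;> rw [h]
      · exact Or.inr ((hC2 p hb1).symm)
      · exact Or.inr ((hC (p+1)).symm)
      · exact Or.inl rfl
      · exact Or.inr (hC (p+2))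
      · exact Or.inr (hC2 (p+2) hb3)
    · rw [if_neg h13] at h2 ⊢
      by_cases hb2 : b (p+2) = true
      · have h12 : (b (p+1) || b (p+2)) = true := by rw [hb2]; simp
        rw [if_pos h12] at h2
        rw [if_pos hb2]
        have hj : j = p ∨ j = p+1 ∨ j = p+2 ∨ j = p+3 := by omega
        rcases hj with h|h|h|h <;> rw [h]
        · exact Or.inr ((hC p).symm)
        · exact Or.inl rfl
        · exact Or.inr (hC (p+1))
        · exact Or.inr (hC2 (p+1) hb2)
      · rw [if_neg hb2]
        by_cases hb1 : b (p+1) = true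
        · have h12 : (b (p+1) || b (p+2)) = true := by rw [hb1]; simp
          rw [if_pos h12] at h2
          rw [if_pos hb1]
          have hj : j = p ∨ j = p+1 ∨ j = p+2 ∨ j = p+3 := by omega
          rcases hj with h|h|h|h <;> rw [h]
          · exact Or.inr ((hC2 p hb1).symm)
          · exact Or.inr ((hC (p+1)).symm)
          · exact Or.inl rfl
          · exact Or.inr (hC (p+2))
        · rw [if_neg hb1]
          have h12' : ¬ ((b (p+1) || b (p+2)) = true) := by
            revert hb1 hb2; cases b (p+1) <;> cases b (p+2) <;> simp
          rw [if_neg h12'] at h2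
          have hj : j = p ∨ j = p+1 ∨ j = p+2 := by omega
          rcases hj with h|h|h <;> rw [h]
          · exact Or.inr ((hC p).symm)
          · exact Or.inl rfl
          · exact Or.inr (hC (p+1))
  -- the dominating set
  set Df : Finset (ZMod n) :=
    (Finset.range K).image (fun k => ((centB b (frB b k) : ℕ) : ZMod n)) with hDf
  have hdom : IsDominating G ↑Df := by
    intro v
    have hv : ((v.val : ℕ) : ZMod n) = v := ZMod.natCast_rightInverse v
    have hjn : v.val < frB b K := lt_of_lt_of_le (ZMod.val_lt v) hK
    obtain ⟨k, hkK, ha, hb2⟩ := frB_exists b K v.val hjn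
    rcases hcover (frB b k) v.val ha hb2 with he | hadj
    · left
      refine Finset.mem_coe.mpr (Finset.mem_image.mpr ⟨k, Finset.mem_range.mpr hkK, ?_⟩)
      rw [he, hv]
    · right
      refine ⟨_, Finset.mem_coe.mpr (Finset.mem_image.mpr ⟨k, Finset.mem_range.mpr hkK, rfl⟩), ?_⟩
      rw [← hv]
      exact hadj
  have hdomle : domNum G ≤ (↑Df : Set (ZMod n)).ncard := Nat.sInf_le ⟨↑Df, hdom, rfl⟩
  have hcardle : (↑Df : Set (ZMod n)).ncard ≤ K := by
    rw [Set.ncard_coe_finset]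
    exact le_trans Finset.card_image_le (by simp)
  have hceil : K ≤ ⌈(2 * (n : ℚ)) / 7⌉₊ := by
    by_contra hcon
    push_neg at hcon
    have q1 : (2 * (n : ℚ)) / 7 ≤ (⌈(2 * (n : ℚ)) / 7⌉₊ : ℚ) := Nat.le_ceil _
    have q2 : ((⌈(2 * (n : ℚ)) / 7⌉₊ : ℕ) : ℚ) + 1 ≤ (K : ℚ) := by exact_mod_cast hcon
    have q3 : (7 : ℚ) * K ≤ 2 * n + 6 := by exact_mod_cast h7K
    linarith
  exact le_trans hdomle (le_trans hcardle hceil)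
end
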